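/- arXiv:2308.05446 — 2 statements merged into one kernel-verified Lean document; each statement's English description precedes it below -/
import Mathlib

section
/- For t > −1, s ∈ [0,1], and z₁, z₂ ∈ ℝ^{N×n} with s + |z₁| + |z₂| > 0, one has ∫₀¹ [s² + |z₁ + y(z₂ − z₁)|²]^{t/2} dy ≈ (s² + |z₁|² + |z₂|²)^{t/2}, with implicit constants depending only on n, N, t. -/
open MeasureTheory intervalIntegral Set Real

private lemma stmt5_ae_ne (c : ℝ) : ∀ᵐ y : ℝ, y ≠ c := by
  refine MeasureTheory.ae_iff.mpr ?_
  simp only [not_not, Set.setOf_eq_eq_singleton]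
  exact Real.volume_singleton

/-- integrability of `|y - c| ^ q` for `q > -1` -/
private lemma stmt5_abs_int (q : ℝ) (hq : -1 < q) (c a b : ℝ) :
    IntervalIntegrable (fun y => |y - c| ^ q) volume a b := by
  have base : ∀ x : ℝ, 0 ≤ x → IntervalIntegrable (fun u : ℝ => |u| ^ q) volume 0 x := by
    intro x hx
    have h1 : IntervalIntegrable (fun u : ℝ => u ^ q) volume 0 x := intervalIntegrable_rpow' hq
    rw [intervalIntegrable_iff] at h1 ⊢
    refine h1.congr_fun (fun u hu => ?_) measurableSet_uIoc
    rw [Set.uIoc_of_le hx] at hu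
    rw [abs_of_pos hu.1]
  have all0 : ∀ x : ℝ, IntervalIntegrable (fun u : ℝ => |u| ^ q) volume 0 x := by
    intro x
    rcases le_or_gt 0 x with hx | hx
    · exact base x hx
    · have h1 : IntervalIntegrable (fun u : ℝ => |(-u)| ^ q) volume (-0) (-x) := by
        simp only [abs_neg]
        simpa using base (-x) (by linarith)
      exact (IntervalIntegrable.iff_comp_neg enorm_ne_top).mpr h1
  have h2 : IntervalIntegrable (fun u : ℝ => |u| ^ q) volume (a - c) (b - c) :=
    (all0 (a - c)).symm.trans (all0 (b - c))
  have h3 := h2.comp_sub_right c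
  simpa using h3

/-- bound on `∫₀¹ |y - c| ^ q` for `-1 < q ≤ 0` -/
private lemma stmt5_abs_int_le (q : ℝ) (hq : -1 < q) (hq0 : q ≤ 0) (c : ℝ) :
    (∫ y in (0:ℝ)..1, |y - c| ^ q) ≤ 2 / (q + 1) := by
  have hp : 0 < q + 1 := by linarith
  have hbasic : ∀ x : ℝ, 0 ≤ x → x ≤ 1 → (∫ u in (0:ℝ)..x, u ^ q) ≤ 1 / (q + 1) := by
    intro x hx0 hx1
    rw [integral_rpow (Or.inl hq)]
    rw [Real.zero_rpow (by linarith)]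
    have : x ^ (q + 1) ≤ 1 := Real.rpow_le_one hx0 hx1 hp.le
    rw [div_le_div_iff₀ hp hp]
    nlinarith
  have hone : (∫ u in (0:ℝ)..1, u ^ q) = 1 / (q + 1) := by
    rw [integral_rpow (Or.inl hq)]
    rw [Real.zero_rpow (by linarith), Real.one_rpow]
    ring
  rcases le_or_gt c 0 with hc | hc
  · -- compare with y ^ q
    have hmono : (∫ y in (0:ℝ)..1, |y - c| ^ q) ≤ ∫ y in (0:ℝ)..1, y ^ q := by
      refine integral_mono_ae_restrict zero_le_one (stmt5_abs_int q hq c 0 1)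
        (intervalIntegrable_rpow' hq) ?_
      filter_upwards [ae_restrict_mem measurableSet_Icc, ae_restrict_of_ae (stmt5_ae_ne 0)]
        with y hy hy0
      have hypos : 0 < y := lt_of_le_of_ne hy.1 (Ne.symm hy0)
      rw [abs_of_pos (by linarith : (0:ℝ) < y - c)]
      exact Real.rpow_le_rpow_of_nonpos hypos (by linarith) hq0
    calc (∫ y in (0:ℝ)..1, |y - c| ^ q) ≤ ∫ y in (0:ℝ)..1, y ^ q := hmono
      _ = 1 / (q + 1) := hone
      _ ≤ 2 / (q + 1) := by rw [div_le_div_iff₀ hp hp]; nlinarith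
  rcases le_or_gt 1 c with hc1 | hc1
  · -- compare with (1 - y) ^ q
    have hint2 : IntervalIntegrable (fun y : ℝ => (1 - y) ^ q) volume 0 1 := by
      have := (intervalIntegrable_rpow' hq (a := 1) (b := 0)).comp_sub_left 1
      simpa using this
    have hmono : (∫ y in (0:ℝ)..1, |y - c| ^ q) ≤ ∫ y in (0:ℝ)..1, (1 - y) ^ q := by
      refine integral_mono_ae_restrict zero_le_one (stmt5_abs_int q hq c 0 1) hint2 ?_
      filter_upwards [ae_restrict_mem measurableSet_Icc, ae_restrict_of_ae (stmt5_ae_ne 1)]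
        with y hy hy1
      have hylt : y < 1 := lt_of_le_of_ne hy.2 hy1
      have h1 : |y - c| = c - y := by
        rw [abs_sub_comm]; exact abs_of_nonneg (by linarith)
      rw [h1]
      exact Real.rpow_le_rpow_of_nonpos (by linarith) (by linarith) hq0
    have hval : (∫ y in (0:ℝ)..1, (1 - y) ^ q) = ∫ u in (0:ℝ)..1, u ^ q := by
      have := intervalIntegral.integral_comp_sub_left (a := (0:ℝ)) (b := 1)
        (fun u : ℝ => u ^ q) 1
      simpa using this
    calc (∫ y in (0:ℝ)..1, |y - c| ^ q) ≤ ∫ y in (0:ℝ)..1, (1 - y) ^ q := hmono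
      _ = 1 / (q + 1) := by rw [hval, hone]
      _ ≤ 2 / (q + 1) := by rw [div_le_div_iff₀ hp hp]; nlinarith
  · -- 0 < c < 1 : split at c
    have hsplit : (∫ y in (0:ℝ)..1, |y - c| ^ q)
        = (∫ y in (0:ℝ)..c, |y - c| ^ q) + ∫ y in c..(1:ℝ), |y - c| ^ q :=
      (integral_add_adjacent_intervals (stmt5_abs_int q hq c 0 c)
        (stmt5_abs_int q hq c c 1)).symm
    have hpart1 : (∫ y in (0:ℝ)..c, |y - c| ^ q) ≤ 1 / (q + 1) := by
      have heq : (∫ y in (0:ℝ)..c, |y - c| ^ q) = ∫ y in (0:ℝ)..c, (c - y) ^ q := by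
        refine intervalIntegral.integral_congr (fun y hy => ?_)
        rw [Set.uIcc_of_le hc.le] at hy
        rw [abs_sub_comm, abs_of_nonneg (by linarith [hy.2])]
      have hval : (∫ y in (0:ℝ)..c, (c - y) ^ q) = ∫ u in (0:ℝ)..c, u ^ q := by
        have := intervalIntegral.integral_comp_sub_left (a := (0:ℝ)) (b := c)
          (fun u : ℝ => u ^ q) c
        simpa using this
      rw [heq, hval]
      exact hbasic c hc.le hc1.le
    have hpart2 : (∫ y in c..(1:ℝ), |y - c| ^ q) ≤ 1 / (q + 1) := by
      have heq : (∫ y in c..(1:ℝ), |y - c| ^ q) = ∫ y in c..(1:ℝ), (y - c) ^ q := by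
        refine intervalIntegral.integral_congr (fun y hy => ?_)
        rw [Set.uIcc_of_le hc1.le] at hy
        rw [abs_of_nonneg (by linarith [hy.1])]
      have hval : (∫ y in c..(1:ℝ), (y - c) ^ q) = ∫ u in (0:ℝ)..(1 - c), u ^ q := by
        have := intervalIntegral.integral_comp_sub_right (a := c) (b := 1)
          (fun u : ℝ => u ^ q) c
        simpa using this
      rw [heq, hval]
      exact hbasic (1 - c) (by linarith) (by linarith)
    rw [hsplit]
    have : 2 / (q + 1) = 1 / (q + 1) + 1 / (q + 1) := by ring
    rw [this]
    exact add_le_add hpart1 hpart2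

private lemma stmt5_rw_ar (a x r : ℝ) (ha : 0 ≤ a) : (a * x ^ 2) ^ r = a ^ r * |x| ^ (2 * r) := by
  rw [Real.mul_rpow ha (sq_nonneg _), ← sq_abs x, ← Real.rpow_natCast |x| 2,
    ← Real.rpow_mul (abs_nonneg _)]
  norm_num

/-- the integrand is dominated by `L` on `[0,1]` -/
private lemma stmt5_fle (e a y₀ y : ℝ) (he : 0 ≤ e) (ha : 0 ≤ a) (hy0 : 0 ≤ y) (hy1 : y ≤ 1) :
    e + a * (y - y₀) ^ 2 ≤ 2 * e + a * (y₀ ^ 2 + (1 - y₀) ^ 2) := by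
  have h1 : (y - y₀) ^ 2 ≤ y₀ ^ 2 + (1 - y₀) ^ 2 := by
    nlinarith [mul_nonneg (sub_nonneg.2 hy1) (sq_nonneg (1 - y₀)),
      mul_nonneg hy0 (sq_nonneg y₀), mul_nonneg hy0 (sub_nonneg.2 hy1)]
  nlinarith [mul_nonneg ha (sub_nonneg.2 h1)]

set_option maxHeartbeats 2000000 in
private lemma stmt5_core (r : ℝ) (hr : -(1/2 : ℝ) < r) : ∃ c₁ c₂ : ℝ, 0 < c₁ ∧ 0 < c₂ ∧
    ∀ e a y₀ : ℝ, 0 ≤ e → 0 ≤ a → 0 < 2 * e + a * (y₀ ^ 2 + (1 - y₀) ^ 2) →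
      c₁ * (2 * e + a * (y₀ ^ 2 + (1 - y₀) ^ 2)) ^ r
          ≤ (∫ y in (0:ℝ)..1, (e + a * (y - y₀) ^ 2) ^ r) ∧
      (∫ y in (0:ℝ)..1, (e + a * (y - y₀) ^ 2) ^ r)
          ≤ c₂ * (2 * e + a * (y₀ ^ 2 + (1 - y₀) ^ 2)) ^ r := by
  rcases le_or_gt 0 r with hr0 | hr0
  · -- r ≥ 0
    refine ⟨(1/4) * (1/8) ^ r, 1, by positivity, one_pos, ?_⟩
    intro e a y₀ he ha hL
    have hfpos : ∀ y : ℝ, 0 ≤ e + a * (y - y₀) ^ 2 := fun y => by positivity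
    have hcont : Continuous (fun y : ℝ => (e + a * (y - y₀) ^ 2) ^ r) := by
      apply Continuous.rpow_const
      · fun_prop
      · intro x; exact Or.inr hr0
    have hI : ∀ u v : ℝ, IntervalIntegrable (fun y => (e + a * (y - y₀) ^ 2) ^ r) volume u v :=
      fun u v => hcont.intervalIntegrable u v
    constructor
    · -- lower bound
      rcases le_or_gt y₀ (1/2) with hc | hc
      · have key : ∀ y ∈ Icc (3/4:ℝ) 1,
            (1/8) * (2 * e + a * (y₀ ^ 2 + (1 - y₀) ^ 2)) ≤ e + a * (y - y₀) ^ 2 := by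
          intro y hy
          obtain ⟨hy0, hy1⟩ := hy
          have h8 : y₀ ^ 2 + (1 - y₀) ^ 2 ≤ 8 * (y - y₀) ^ 2 := by
            nlinarith [mul_nonneg (show (0:ℝ) ≤ y - 3/4 by linarith)
                (show (0:ℝ) ≤ y + 3/4 - 2*y₀ by linarith),
              mul_nonneg (show (0:ℝ) ≤ 1/2 - y₀ by linarith)
                (show (0:ℝ) ≤ 7/6 - y₀ by linarith)]
          nlinarith [mul_nonneg ha (sub_nonneg.2 h8)]
        have hsplit : (∫ y in (0:ℝ)..1, (e + a * (y - y₀) ^ 2) ^ r)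
            = (∫ y in (0:ℝ)..(3/4), (e + a * (y - y₀) ^ 2) ^ r)
              + ∫ y in (3/4:ℝ)..1, (e + a * (y - y₀) ^ 2) ^ r :=
          (integral_add_adjacent_intervals (hI 0 (3/4)) (hI (3/4) 1)).symm
        have h1 : 0 ≤ ∫ y in (0:ℝ)..(3/4), (e + a * (y - y₀) ^ 2) ^ r :=
          intervalIntegral.integral_nonneg (by norm_num)
            (fun y _ => Real.rpow_nonneg (hfpos y) r)
        have h2 : ((1:ℝ) - 3/4) • (((1/8) * (2 * e + a * (y₀ ^ 2 + (1 - y₀) ^ 2))) ^ r)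
            ≤ ∫ y in (3/4:ℝ)..1, (e + a * (y - y₀) ^ 2) ^ r := by
          rw [← intervalIntegral.integral_const]
          refine integral_mono_on (by norm_num) (intervalIntegrable_const) (hI _ _) ?_
          intro y hy
          exact Real.rpow_le_rpow (by positivity) (key y hy) hr0
        have h3 : (((1/8) * (2 * e + a * (y₀ ^ 2 + (1 - y₀) ^ 2))) ^ r)
            = (1/8) ^ r * (2 * e + a * (y₀ ^ 2 + (1 - y₀) ^ 2)) ^ r :=
          Real.mul_rpow (by norm_num) hL.le
        rw [hsplit]
        rw [h3] at h2
        rw [smul_eq_mul] at h2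
        nlinarith [h2, h1]
      · have key : ∀ y ∈ Icc (0:ℝ) (1/4),
            (1/8) * (2 * e + a * (y₀ ^ 2 + (1 - y₀) ^ 2)) ≤ e + a * (y - y₀) ^ 2 := by
          intro y hy
          obtain ⟨hy0, hy1⟩ := hy
          have h8 : y₀ ^ 2 + (1 - y₀) ^ 2 ≤ 8 * (y - y₀) ^ 2 := by
            nlinarith [mul_nonneg (show (0:ℝ) ≤ 1/4 - y by linarith)
                (show (0:ℝ) ≤ 2*y₀ - y - 1/4 by linarith),
              mul_nonneg (show (0:ℝ) ≤ y₀ - 1/2 by linarith)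
                (show (0:ℝ) ≤ y₀ + 1/6 by linarith)]
          nlinarith [mul_nonneg ha (sub_nonneg.2 h8)]
        have hsplit : (∫ y in (0:ℝ)..1, (e + a * (y - y₀) ^ 2) ^ r)
            = (∫ y in (0:ℝ)..(1/4), (e + a * (y - y₀) ^ 2) ^ r)
              + ∫ y in (1/4:ℝ)..1, (e + a * (y - y₀) ^ 2) ^ r :=
          (integral_add_adjacent_intervals (hI 0 (1/4)) (hI (1/4) 1)).symm
        have h1 : 0 ≤ ∫ y in (1/4:ℝ)..1, (e + a * (y - y₀) ^ 2) ^ r :=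
          intervalIntegral.integral_nonneg (by norm_num)
            (fun y _ => Real.rpow_nonneg (hfpos y) r)
        have h2 : ((1/4:ℝ) - 0) • (((1/8) * (2 * e + a * (y₀ ^ 2 + (1 - y₀) ^ 2))) ^ r)
            ≤ ∫ y in (0:ℝ)..(1/4), (e + a * (y - y₀) ^ 2) ^ r := by
          rw [← intervalIntegral.integral_const]
          refine integral_mono_on (by norm_num) (intervalIntegrable_const) (hI _ _) ?_
          intro y hy
          exact Real.rpow_le_rpow (by positivity) (key y hy) hr0
        have h3 : (((1/8) * (2 * e + a * (y₀ ^ 2 + (1 - y₀) ^ 2))) ^ r)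
            = (1/8) ^ r * (2 * e + a * (y₀ ^ 2 + (1 - y₀) ^ 2)) ^ r :=
          Real.mul_rpow (by norm_num) hL.le
        rw [hsplit]
        rw [h3] at h2
        rw [smul_eq_mul] at h2
        nlinarith [h2, h1]
    · -- upper bound
      have key : ∀ y ∈ Icc (0:ℝ) 1, (e + a * (y - y₀) ^ 2) ^ r
          ≤ (2 * e + a * (y₀ ^ 2 + (1 - y₀) ^ 2)) ^ r := by
        intro y hy
        exact Real.rpow_le_rpow (hfpos y) (stmt5_fle e a y₀ y he ha hy.1 hy.2) hr0
      have h2 := integral_mono_on zero_le_one (hI 0 1) intervalIntegrable_const key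
      rw [intervalIntegral.integral_const, smul_eq_mul] at h2
      calc (∫ y in (0:ℝ)..1, (e + a * (y - y₀) ^ 2) ^ r)
          ≤ (1 - 0) * (2 * e + a * (y₀ ^ 2 + (1 - y₀) ^ 2)) ^ r := h2
        _ = 1 * (2 * e + a * (y₀ ^ 2 + (1 - y₀) ^ 2)) ^ r := by ring
  · -- r < 0
    have h2r : (0:ℝ) < 2 * r + 1 := by linarith
    have hq : (-1:ℝ) < 2 * r := by linarith
    have hc2pos : (0:ℝ) < (1/4) ^ r + (1/16) ^ r * (2 / (2 * r + 1)) + (1/10) ^ r := by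
      have h1 : (0:ℝ) < (1/4:ℝ) ^ r := Real.rpow_pos_of_pos (by norm_num) r
      have h2 : (0:ℝ) < (1/16:ℝ) ^ r := Real.rpow_pos_of_pos (by norm_num) r
      have h3 : (0:ℝ) < (1/10:ℝ) ^ r := Real.rpow_pos_of_pos (by norm_num) r
      have h4 : (0:ℝ) < 2 / (2 * r + 1) := div_pos two_pos h2r
      positivity
    refine ⟨1, (1/4) ^ r + (1/16) ^ r * (2 / (2 * r + 1)) + (1/10) ^ r, one_pos, hc2pos, ?_⟩
    intro e a y₀ he ha hL
    have hLr : 0 < (2 * e + a * (y₀ ^ 2 + (1 - y₀) ^ 2)) ^ r := Real.rpow_pos_of_pos hL r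
    have hea : 0 < e ∨ 0 < a := by
      by_contra h
      push_neg at h
      have he0 : e = 0 := le_antisymm h.1 he
      have ha0 : a = 0 := le_antisymm h.2 ha
      rw [he0, ha0] at hL
      norm_num at hL
    -- integrability
    have hInt : IntervalIntegrable (fun y => (e + a * (y - y₀) ^ 2) ^ r) volume 0 1 := by
      rcases he.eq_or_lt with he0 | hepos
      · have ha0 : 0 < a := by
          rcases hea with h | h
          · exfalso; rw [← he0] at h; exact lt_irrefl 0 h
          · exact h
        have heq : (fun y : ℝ => (e + a * (y - y₀) ^ 2) ^ r)
            = fun y => a ^ r * |y - y₀| ^ (2 * r) := by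
          funext y
          rw [← he0, zero_add, stmt5_rw_ar a (y - y₀) r ha]
        rw [heq]
        exact (stmt5_abs_int (2 * r) hq y₀ 0 1).const_mul _
      · refine (Continuous.rpow_const ?_ ?_).intervalIntegrable 0 1
        · fun_prop
        · intro x
          left
          have : 0 < e + a * (x - y₀) ^ 2 := by positivity
          exact ne_of_gt this
    -- a.e. positivity
    have hfaepos : ∀ᵐ y ∂(volume.restrict (Icc (0:ℝ) 1)), 0 < e + a * (y - y₀) ^ 2 := by
      filter_upwards [ae_restrict_of_ae (stmt5_ae_ne y₀)] with y hy
      rcases he.eq_or_lt with he0 | hepos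
      · have ha0 : 0 < a := by
          rcases hea with h | h
          · exfalso; rw [← he0] at h; exact lt_irrefl 0 h
          · exact h
        have h' : y - y₀ ≠ 0 := sub_ne_zero.mpr hy
        have h2 : 0 < |y - y₀| := abs_pos.mpr h'
        have h3 := pow_pos h2 2
        rw [sq_abs] at h3
        nlinarith [mul_pos ha0 h3]
      · positivity
    constructor
    · -- lower bound (r < 0): integrand ≥ L ^ r a.e.
      have hmono := integral_mono_ae_restrict zero_le_one
        (_root_.intervalIntegrable_const (c := (2 * e + a * (y₀ ^ 2 + (1 - y₀) ^ 2)) ^ r)) hInt ?_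
      · rw [intervalIntegral.integral_const, smul_eq_mul] at hmono
        calc 1 * (2 * e + a * (y₀ ^ 2 + (1 - y₀) ^ 2)) ^ r
            = (1 - 0) * (2 * e + a * (y₀ ^ 2 + (1 - y₀) ^ 2)) ^ r := by ring
          _ ≤ _ := hmono
      · filter_upwards [hfaepos, ae_restrict_mem measurableSet_Icc] with y hy hmem
        exact Real.rpow_le_rpow_of_nonpos hy (stmt5_fle e a y₀ y he ha hmem.1 hmem.2) hr0.le
    · -- upper bound (r < 0)
      by_cases hce : (2 * e + a * (y₀ ^ 2 + (1 - y₀) ^ 2)) / 4 ≤ e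
      · -- case e large
        have key : ∀ y ∈ Icc (0:ℝ) 1, (e + a * (y - y₀) ^ 2) ^ r
            ≤ ((2 * e + a * (y₀ ^ 2 + (1 - y₀) ^ 2)) / 4) ^ r := by
          intro y hy
          refine Real.rpow_le_rpow_of_nonpos (by positivity) ?_ hr0.le
          nlinarith [mul_nonneg ha (sq_nonneg (y - y₀))]
        have h2 := integral_mono_on zero_le_one hInt intervalIntegrable_const key
        rw [intervalIntegral.integral_const, smul_eq_mul] at h2
        have h3 : ((2 * e + a * (y₀ ^ 2 + (1 - y₀) ^ 2)) / 4) ^ r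
            = (1/4) ^ r * (2 * e + a * (y₀ ^ 2 + (1 - y₀) ^ 2)) ^ r := by
          rw [show (2 * e + a * (y₀ ^ 2 + (1 - y₀) ^ 2)) / 4
            = (1/4) * (2 * e + a * (y₀ ^ 2 + (1 - y₀) ^ 2)) by ring]
          exact Real.mul_rpow (by norm_num) hL.le
        have h4 : (0:ℝ) < (1/16:ℝ) ^ r * (2 / (2 * r + 1)) := by
          have := Real.rpow_pos_of_pos (show (0:ℝ) < 1/16 by norm_num) r
          have := div_pos (show (0:ℝ) < 2 by norm_num) h2r
          positivity
        have h5 : (0:ℝ) < (1/10:ℝ) ^ r := Real.rpow_pos_of_pos (by norm_num) r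
        rw [h3] at h2
        nlinarith [h2, mul_pos h4 hLr, mul_pos h5 hLr]
      · push_neg at hce
        by_cases hca : (2 * e + a * (y₀ ^ 2 + (1 - y₀) ^ 2)) / 16 ≤ a
        · -- middle case: compare with a ^ r * |y - y₀| ^ (2r)
          have ha0 : 0 < a := lt_of_lt_of_le (by positivity) hca
          have hcomp : ∀ᵐ y ∂(volume.restrict (Icc (0:ℝ) 1)),
              (e + a * (y - y₀) ^ 2) ^ r ≤ a ^ r * |y - y₀| ^ (2 * r) := by
            filter_upwards [ae_restrict_of_ae (stmt5_ae_ne y₀)] with y hy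
            have h' : y - y₀ ≠ 0 := sub_ne_zero.mpr hy
            have h2 : 0 < |y - y₀| := abs_pos.mpr h'
            have h3 := pow_pos h2 2
            rw [sq_abs] at h3
            have h4 : 0 < a * (y - y₀) ^ 2 := mul_pos ha0 h3
            have h5 : (e + a * (y - y₀) ^ 2) ^ r ≤ (a * (y - y₀) ^ 2) ^ r :=
              Real.rpow_le_rpow_of_nonpos h4 (by linarith) hr0.le
            rw [stmt5_rw_ar a (y - y₀) r ha] at h5
            exact h5
          have hII : IntervalIntegrable (fun y => a ^ r * |y - y₀| ^ (2 * r)) volume 0 1 :=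
            (stmt5_abs_int (2 * r) hq y₀ 0 1).const_mul _
          have hm := integral_mono_ae_restrict zero_le_one hInt hII hcomp
          have hval : (∫ y in (0:ℝ)..1, a ^ r * |y - y₀| ^ (2 * r))
              = a ^ r * ∫ y in (0:ℝ)..1, |y - y₀| ^ (2 * r) :=
            intervalIntegral.integral_const_mul _ _
          have habs := stmt5_abs_int_le (2 * r) hq (by linarith) y₀
          have harpos : 0 < a ^ r := Real.rpow_pos_of_pos ha0 r
          have har : a ^ r ≤ (1/16) ^ r * (2 * e + a * (y₀ ^ 2 + (1 - y₀) ^ 2)) ^ r := by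
            have hstep : a ^ r ≤ ((2 * e + a * (y₀ ^ 2 + (1 - y₀) ^ 2)) / 16) ^ r :=
              Real.rpow_le_rpow_of_nonpos (by positivity) hca hr0.le
            have heq : ((2 * e + a * (y₀ ^ 2 + (1 - y₀) ^ 2)) / 16) ^ r
                = (1/16) ^ r * (2 * e + a * (y₀ ^ 2 + (1 - y₀) ^ 2)) ^ r := by
              rw [show (2 * e + a * (y₀ ^ 2 + (1 - y₀) ^ 2)) / 16
                = (1/16) * (2 * e + a * (y₀ ^ 2 + (1 - y₀) ^ 2)) by ring]
              exact Real.mul_rpow (by norm_num) hL.le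
            rw [heq] at hstep
            exact hstep
          have hintnn : 0 ≤ ∫ y in (0:ℝ)..1, |y - y₀| ^ (2 * r) :=
            intervalIntegral.integral_nonneg zero_le_one
              (fun y _ => Real.rpow_nonneg (abs_nonneg _) _)
          have hchain : (∫ y in (0:ℝ)..1, (e + a * (y - y₀) ^ 2) ^ r)
              ≤ (1/16) ^ r * (2 * e + a * (y₀ ^ 2 + (1 - y₀) ^ 2)) ^ r * (2 / (2 * r + 1)) := by
            calc (∫ y in (0:ℝ)..1, (e + a * (y - y₀) ^ 2) ^ r)
                ≤ ∫ y in (0:ℝ)..1, a ^ r * |y - y₀| ^ (2 * r) := hm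
              _ = a ^ r * ∫ y in (0:ℝ)..1, |y - y₀| ^ (2 * r) := hval
              _ ≤ a ^ r * (2 / (2 * r + 1)) := by
                  exact mul_le_mul_of_nonneg_left habs harpos.le
              _ ≤ (1/16) ^ r * (2 * e + a * (y₀ ^ 2 + (1 - y₀) ^ 2)) ^ r * (2 / (2 * r + 1)) := by
                  exact mul_le_mul_of_nonneg_right har (by positivity)
          have h5 : (0:ℝ) < (1/4:ℝ) ^ r := Real.rpow_pos_of_pos (by norm_num) r
          have h6 : (0:ℝ) < (1/10:ℝ) ^ r := Real.rpow_pos_of_pos (by norm_num) r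
          nlinarith [hchain, mul_pos h5 hLr, mul_pos h6 hLr]
        · -- last case: a small, so |y₀| large
          push_neg at hca
          have hak : (2 * e + a * (y₀ ^ 2 + (1 - y₀) ^ 2)) / 2
              < a * (y₀ ^ 2 + (1 - y₀) ^ 2) := by linarith
          have ha0 : 0 < a := by
            rcases ha.eq_or_lt with h | h
            · exfalso
              rw [← h] at hak
              simp at hak
              linarith
            · exact h
          have hk8 : 8 < y₀ ^ 2 + (1 - y₀) ^ 2 := by
            have h8a : a * 8 < a * (y₀ ^ 2 + (1 - y₀) ^ 2) := by nlinarith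
            exact lt_of_mul_lt_mul_left (by linarith) ha0.le
          have hy₀ : y₀ ≤ -1 ∨ 2 ≤ y₀ := by
            by_contra h
            push_neg at h
            obtain ⟨h1, h2⟩ := h
            nlinarith [mul_pos (show (0:ℝ) < y₀ + 1 by linarith)
              (show (0:ℝ) < 2 - y₀ by linarith)]
          have key : ∀ y ∈ Icc (0:ℝ) 1,
              (2 * e + a * (y₀ ^ 2 + (1 - y₀) ^ 2)) / 10 ≤ e + a * (y - y₀) ^ 2 := by
            intro y hy
            obtain ⟨hy0, hy1⟩ := hy
            have h5 : y₀ ^ 2 + (1 - y₀) ^ 2 ≤ 5 * (y - y₀) ^ 2 := by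
              rcases hy₀ with h | h
              · nlinarith [mul_nonneg hy0 (show (0:ℝ) ≤ y - 2*y₀ by linarith),
                  mul_nonneg (show (0:ℝ) ≤ 1 - 3*y₀ by linarith)
                    (show (0:ℝ) ≤ -1 - y₀ by linarith)]
              · nlinarith [mul_nonneg (show (0:ℝ) ≤ 1 - y by linarith)
                    (show (0:ℝ) ≤ 2*y₀ - y - 1 by linarith),
                  mul_nonneg (show (0:ℝ) ≤ 3*y₀ - 2 by linarith)
                    (show (0:ℝ) ≤ y₀ - 2 by linarith)]
            have h6 : a * (y₀ ^ 2 + (1 - y₀) ^ 2) ≤ 5 * (a * (y - y₀) ^ 2) := by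
              nlinarith [mul_le_mul_of_nonneg_left h5 ha]
            linarith
          have keyr : ∀ y ∈ Icc (0:ℝ) 1, (e + a * (y - y₀) ^ 2) ^ r
              ≤ ((2 * e + a * (y₀ ^ 2 + (1 - y₀) ^ 2)) / 10) ^ r := by
            intro y hy
            exact Real.rpow_le_rpow_of_nonpos (by positivity) (key y hy) hr0.le
          have h2 := integral_mono_on zero_le_one hInt intervalIntegrable_const keyr
          rw [intervalIntegral.integral_const, smul_eq_mul] at h2
          have h3 : ((2 * e + a * (y₀ ^ 2 + (1 - y₀) ^ 2)) / 10) ^ r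
              = (1/10) ^ r * (2 * e + a * (y₀ ^ 2 + (1 - y₀) ^ 2)) ^ r := by
            rw [show (2 * e + a * (y₀ ^ 2 + (1 - y₀) ^ 2)) / 10
              = (1/10) * (2 * e + a * (y₀ ^ 2 + (1 - y₀) ^ 2)) by ring]
            exact Real.mul_rpow (by norm_num) hL.le
          rw [h3] at h2
          have h4 : (0:ℝ) < (1/16:ℝ) ^ r * (2 / (2 * r + 1)) := by
            have := Real.rpow_pos_of_pos (show (0:ℝ) < 1/16 by norm_num) r
            have := div_pos (show (0:ℝ) < 2 by norm_num) h2r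
            positivity
          have h5 : (0:ℝ) < (1/4:ℝ) ^ r := Real.rpow_pos_of_pos (by norm_num) r
          nlinarith [h2, mul_pos h4 hLr, mul_pos h5 hLr]

set_option maxHeartbeats 2000000 in
theorem stmt5 (N n : ℕ) (t : ℝ) (ht : -1 < t) :
    ∃ c₁ c₂ : ℝ, 0 < c₁ ∧ 0 < c₂ ∧
      ∀ (s : ℝ), s ∈ Set.Icc (0 : ℝ) 1 →
        ∀ z₁ z₂ : EuclideanSpace ℝ (Fin N × Fin n), 0 < s + ‖z₁‖ + ‖z₂‖ →
          c₁ * (s ^ 2 + ‖z₁‖ ^ 2 + ‖z₂‖ ^ 2) ^ (t / 2) ≤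
            (∫ y in (0:ℝ)..1, (s ^ 2 + ‖z₁ + y • (z₂ - z₁)‖ ^ 2) ^ (t / 2)) ∧
          (∫ y in (0:ℝ)..1, (s ^ 2 + ‖z₁ + y • (z₂ - z₁)‖ ^ 2) ^ (t / 2)) ≤
            c₂ * (s ^ 2 + ‖z₁‖ ^ 2 + ‖z₂‖ ^ 2) ^ (t / 2) := by
  obtain ⟨c₁, c₂, hc₁, hc₂, hcore⟩ := stmt5_core (t / 2) (by linarith)
  refine ⟨c₁ * min 1 (2 ^ (t / 2)), c₂ * max 1 (2 ^ (t / 2)), ?_, ?_, ?_⟩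
  · have : (0:ℝ) < 2 ^ (t / 2) := Real.rpow_pos_of_pos two_pos _
    have : (0:ℝ) < min 1 (2 ^ (t / 2)) := lt_min one_pos this
    positivity
  · have : (0:ℝ) < 2 ^ (t / 2) := Real.rpow_pos_of_pos two_pos _
    have : (0:ℝ) < max 1 (2 ^ (t / 2)) := lt_of_lt_of_le one_pos (le_max_left _ _)
    positivity
  intro s hs z₁ z₂ hpos
  obtain ⟨hs0, hs1⟩ := hs
  have hM : 0 < s ^ 2 + ‖z₁‖ ^ 2 + ‖z₂‖ ^ 2 := by
    nlinarith [mul_pos hpos hpos, sq_nonneg (s - ‖z₁‖), sq_nonneg (s - ‖z₂‖),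
      sq_nonneg (‖z₁‖ - ‖z₂‖), norm_nonneg z₁, norm_nonneg z₂]
  set w := z₂ - z₁ with hw
  have hexp : ∀ y : ℝ, ‖z₁ + y • w‖ ^ 2
      = ‖z₁‖ ^ 2 + 2 * y * (inner ℝ z₁ w : ℝ) + y ^ 2 * ‖w‖ ^ 2 := by
    intro y
    rw [norm_add_sq_real, real_inner_smul_right, norm_smul, mul_pow, Real.norm_eq_abs, sq_abs]
    ring
  have hCS : (inner ℝ z₁ w : ℝ) ^ 2 ≤ ‖z₁‖ ^ 2 * ‖w‖ ^ 2 := by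
    have := real_inner_mul_inner_self_le z₁ w
    rw [real_inner_self_eq_norm_sq, real_inner_self_eq_norm_sq] at this
    nlinarith [this]
  -- choose parameters e, a, y₀
  obtain ⟨e, y₀, he, hident⟩ :
      ∃ e y₀ : ℝ, 0 ≤ e ∧ ∀ y : ℝ,
        s ^ 2 + ‖z₁ + y • w‖ ^ 2 = e + ‖w‖ ^ 2 * (y - y₀) ^ 2 := by
    rcases eq_or_lt_of_le (norm_nonneg w) with hw0 | hwpos
    · have hw' : w = 0 := by rw [← norm_eq_zero]; exact hw0.symm
      refine ⟨s ^ 2 + ‖z₁‖ ^ 2, 0, by positivity, fun y => ?_⟩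
      rw [hw']
      simp
    · have ha0 : (0:ℝ) < ‖w‖ ^ 2 := by positivity
      refine ⟨s ^ 2 + ‖z₁‖ ^ 2 - (inner ℝ z₁ w : ℝ) ^ 2 / ‖w‖ ^ 2,
        -(inner ℝ z₁ w : ℝ) / ‖w‖ ^ 2, ?_, fun y => ?_⟩
      · have h1 : (inner ℝ z₁ w : ℝ) ^ 2 / ‖w‖ ^ 2 ≤ ‖z₁‖ ^ 2 := by
          rw [div_le_iff₀ ha0]
          exact hCS
        nlinarith [sq_nonneg s]
      · rw [hexp y]
        field_simp
        ring
  have ha : (0:ℝ) ≤ ‖w‖ ^ 2 := by positivity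
  -- relate L to M: L = 2s² + ‖z₁‖² + ‖z₂‖²
  have hL0 : 2 * e + ‖w‖ ^ 2 * (y₀ ^ 2 + (1 - y₀) ^ 2)
      = 2 * s ^ 2 + ‖z₁‖ ^ 2 + ‖z₂‖ ^ 2 := by
    have h0 := hident 0
    have h1 := hident 1
    have hz2 : z₁ + (1:ℝ) • w = z₂ := by
      rw [one_smul, hw]; abel
    rw [hz2] at h1
    have hz0 : z₁ + (0:ℝ) • w = z₁ := by rw [zero_smul, add_zero]
    rw [hz0] at h0
    nlinarith [h0, h1]
  have hLpos : 0 < 2 * e + ‖w‖ ^ 2 * (y₀ ^ 2 + (1 - y₀) ^ 2) := by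
    rw [hL0]; nlinarith [sq_nonneg s]
  obtain ⟨hlow, hup⟩ := hcore e (‖w‖ ^ 2) y₀ he ha hLpos
  -- rewrite the integral
  have hie : (∫ y in (0:ℝ)..1, (s ^ 2 + ‖z₁ + y • (z₂ - z₁)‖ ^ 2) ^ (t / 2))
      = ∫ y in (0:ℝ)..1, (e + ‖w‖ ^ 2 * (y - y₀) ^ 2) ^ (t / 2) := by
    refine intervalIntegral.integral_congr (fun y _ => ?_)
    rw [← hw, hident y]
  -- compare L^(t/2) with M^(t/2)
  have hML : s ^ 2 + ‖z₁‖ ^ 2 + ‖z₂‖ ^ 2 ≤ 2 * e + ‖w‖ ^ 2 * (y₀ ^ 2 + (1 - y₀) ^ 2) := by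
    rw [hL0]; nlinarith [sq_nonneg s]
  have hL2M : 2 * e + ‖w‖ ^ 2 * (y₀ ^ 2 + (1 - y₀) ^ 2)
      ≤ 2 * (s ^ 2 + ‖z₁‖ ^ 2 + ‖z₂‖ ^ 2) := by
    rw [hL0]; nlinarith [norm_nonneg z₁, norm_nonneg z₂]
  have hcmp_low : min 1 (2 ^ (t / 2)) * (s ^ 2 + ‖z₁‖ ^ 2 + ‖z₂‖ ^ 2) ^ (t / 2)
      ≤ (2 * e + ‖w‖ ^ 2 * (y₀ ^ 2 + (1 - y₀) ^ 2)) ^ (t / 2) := by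
    rcases le_or_gt 0 (t / 2) with hr0 | hr0
    · have h1 : (s ^ 2 + ‖z₁‖ ^ 2 + ‖z₂‖ ^ 2) ^ (t / 2)
          ≤ (2 * e + ‖w‖ ^ 2 * (y₀ ^ 2 + (1 - y₀) ^ 2)) ^ (t / 2) :=
        Real.rpow_le_rpow hM.le hML hr0
      have h2 : 0 ≤ (s ^ 2 + ‖z₁‖ ^ 2 + ‖z₂‖ ^ 2) ^ (t / 2) := Real.rpow_nonneg hM.le _
      nlinarith [min_le_left (1:ℝ) (2 ^ (t / 2))]
    · have h1 : (2 * (s ^ 2 + ‖z₁‖ ^ 2 + ‖z₂‖ ^ 2)) ^ (t / 2)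
          ≤ (2 * e + ‖w‖ ^ 2 * (y₀ ^ 2 + (1 - y₀) ^ 2)) ^ (t / 2) :=
        Real.rpow_le_rpow_of_nonpos hLpos hL2M hr0.le
      have h2 : (2 * (s ^ 2 + ‖z₁‖ ^ 2 + ‖z₂‖ ^ 2)) ^ (t / 2)
          = 2 ^ (t / 2) * (s ^ 2 + ‖z₁‖ ^ 2 + ‖z₂‖ ^ 2) ^ (t / 2) :=
        Real.mul_rpow (by norm_num) hM.le
      have h3 : 0 ≤ (s ^ 2 + ‖z₁‖ ^ 2 + ‖z₂‖ ^ 2) ^ (t / 2) := Real.rpow_nonneg hM.le _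
      have h4 := min_le_right (1:ℝ) (2 ^ (t / 2))
      nlinarith [h1, h2, h3, h4]
  have hcmp_up : (2 * e + ‖w‖ ^ 2 * (y₀ ^ 2 + (1 - y₀) ^ 2)) ^ (t / 2)
      ≤ max 1 (2 ^ (t / 2)) * (s ^ 2 + ‖z₁‖ ^ 2 + ‖z₂‖ ^ 2) ^ (t / 2) := by
    rcases le_or_gt 0 (t / 2) with hr0 | hr0
    · have h1 : (2 * e + ‖w‖ ^ 2 * (y₀ ^ 2 + (1 - y₀) ^ 2)) ^ (t / 2)
          ≤ (2 * (s ^ 2 + ‖z₁‖ ^ 2 + ‖z₂‖ ^ 2)) ^ (t / 2) :=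
        Real.rpow_le_rpow hLpos.le hL2M hr0
      have h2 : (2 * (s ^ 2 + ‖z₁‖ ^ 2 + ‖z₂‖ ^ 2)) ^ (t / 2)
          = 2 ^ (t / 2) * (s ^ 2 + ‖z₁‖ ^ 2 + ‖z₂‖ ^ 2) ^ (t / 2) :=
        Real.mul_rpow (by norm_num) hM.le
      have h3 : 0 ≤ (s ^ 2 + ‖z₁‖ ^ 2 + ‖z₂‖ ^ 2) ^ (t / 2) := Real.rpow_nonneg hM.le _
      have h4 := le_max_right (1:ℝ) (2 ^ (t / 2))
      nlinarith [h1, h2, h3, h4]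
    · have h1 : (2 * e + ‖w‖ ^ 2 * (y₀ ^ 2 + (1 - y₀) ^ 2)) ^ (t / 2)
          ≤ (s ^ 2 + ‖z₁‖ ^ 2 + ‖z₂‖ ^ 2) ^ (t / 2) :=
        Real.rpow_le_rpow_of_nonpos hM hML hr0.le
      have h3 : 0 ≤ (s ^ 2 + ‖z₁‖ ^ 2 + ‖z₂‖ ^ 2) ^ (t / 2) := Real.rpow_nonneg hM.le _
      nlinarith [h1, h3, le_max_left (1:ℝ) (2 ^ (t / 2))]
  constructor
  · calc c₁ * min 1 (2 ^ (t / 2)) * (s ^ 2 + ‖z₁‖ ^ 2 + ‖z₂‖ ^ 2) ^ (t / 2)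
        = c₁ * (min 1 (2 ^ (t / 2)) * (s ^ 2 + ‖z₁‖ ^ 2 + ‖z₂‖ ^ 2) ^ (t / 2)) := by ring
      _ ≤ c₁ * (2 * e + ‖w‖ ^ 2 * (y₀ ^ 2 + (1 - y₀) ^ 2)) ^ (t / 2) :=
          mul_le_mul_of_nonneg_left hcmp_low hc₁.le
      _ ≤ ∫ y in (0:ℝ)..1, (e + ‖w‖ ^ 2 * (y - y₀) ^ 2) ^ (t / 2) := hlow
      _ = ∫ y in (0:ℝ)..1, (s ^ 2 + ‖z₁ + y • (z₂ - z₁)‖ ^ 2) ^ (t / 2) := hie.symm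
  · calc (∫ y in (0:ℝ)..1, (s ^ 2 + ‖z₁ + y • (z₂ - z₁)‖ ^ 2) ^ (t / 2))
        = ∫ y in (0:ℝ)..1, (e + ‖w‖ ^ 2 * (y - y₀) ^ 2) ^ (t / 2) := hie
      _ ≤ c₂ * (2 * e + ‖w‖ ^ 2 * (y₀ ^ 2 + (1 - y₀) ^ 2)) ^ (t / 2) := hup
      _ ≤ c₂ * (max 1 (2 ^ (t / 2)) * (s ^ 2 + ‖z₁‖ ^ 2 + ‖z₂‖ ^ 2) ^ (t / 2)) :=
          mul_le_mul_of_nonneg_left hcmp_up hc₂.le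
      _ = c₂ * max 1 (2 ^ (t / 2)) * (s ^ 2 + ‖z₁‖ ^ 2 + ‖z₂‖ ^ 2) ^ (t / 2) := by ring
end

section
/- Equivalence of p-excess and quadratic V-excess: for p ≥ 2 there are constants c₁, c₂ > 0 depending on n, N, p such that for every ball B_ρ(x₀) and every w ∈ W^{1,p}(B_ρ(x₀); ℝ^N), c₁ 𝓔(w; B_ρ(x₀))^{p/2} ≤ 𝓔̃(w; B_ρ(x₀)) ≤ c₂ 𝓔(w; B_ρ(x₀))^{p/2}, where 𝓔(w; B) := (⨍_B |(Dw)_B|^{p−2}|Dw − (Dw)_B|² + |Dw − (Dw)_B|^p dx)^{1/p} and 𝓔̃(w; B) := (⨍_B |V(Dw) − (V(Dw))_B|² dx)^{1/2} with V(z) = |z|^{(p−2)/2} z. -/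
open MeasureTheory Real


section Scalar

/-- For `α ≥ 1`, `0 ≤ s ≤ t`: `t^α - s^α ≤ α t^(α-1) (t-s)`. -/
lemma sA1 {α s t : ℝ} (hα : 1 ≤ α) (hs : 0 ≤ s) (hst : s ≤ t) :
    t ^ α - s ^ α ≤ α * t ^ (α - 1) * (t - s) := by
  rcases eq_or_lt_of_le (hs.trans hst) with h0 | ht
  · have hs0 : s = 0 := le_antisymm (hst.trans h0.ge) hs
    simp [← h0, hs0]
  · have hb : (-1 : ℝ) ≤ (s - t) / t := by
      rw [le_div_iff₀ ht]; linarith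
    have key := one_add_mul_self_le_rpow_one_add hb hα
    have h1 : 1 + (s - t) / t = s / t := by field_simp; ring
    rw [h1, div_rpow hs ht.le] at key
    have htα : 0 < t ^ α := rpow_pos_of_pos ht _
    have htm : t ^ (α - 1) * t = t ^ α := by
      rw [← rpow_add_one ht.ne' (α - 1)]; ring_nf
    have key2 : (1 + α * ((s - t) / t)) * t ^ α ≤ s ^ α := by
      calc (1 + α * ((s - t) / t)) * t ^ α ≤ s ^ α / t ^ α * t ^ α :=
            mul_le_mul_of_nonneg_right key htα.le
        _ = s ^ α := by field_simp
    have h2 : α * ((s - t) / t) * t ^ α = α * t ^ (α - 1) * (s - t) := by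
      rw [← htm]; field_simp
    nlinarith [key2]

/-- For `0 ≤ α ≤ 1`, `0 < s ≤ t`: `t^α - s^α ≤ α s^(α-1) (t-s)`. -/
lemma sA2 {α s t : ℝ} (hα0 : 0 ≤ α) (hα : α ≤ 1) (hs : 0 < s) (hst : s ≤ t) :
    t ^ α - s ^ α ≤ α * s ^ (α - 1) * (t - s) := by
  have hb : (-1 : ℝ) ≤ (t - s) / s :=
    le_trans (by norm_num) (div_nonneg (by linarith) hs.le)
  have key := rpow_one_add_le_one_add_mul_self hb hα0 hα
  have h1 : 1 + (t - s) / s = t / s := by field_simp; ring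
  rw [h1, div_rpow (hs.le.trans hst) hs.le] at key
  have hsα : 0 < s ^ α := rpow_pos_of_pos hs _
  have hsm : s ^ (α - 1) * s = s ^ α := by
    rw [← rpow_add_one hs.ne' (α - 1)]; ring_nf
  have key2 : t ^ α ≤ (1 + α * ((t - s) / s)) * s ^ α := by
    calc t ^ α = t ^ α / s ^ α * s ^ α := by field_simp
      _ ≤ (1 + α * ((t - s) / s)) * s ^ α := mul_le_mul_of_nonneg_right key hsα.le
  have h2 : α * ((t - s) / s) * s ^ α = α * s ^ (α - 1) * (t - s) := by
    rw [← hsm]; field_simp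
  nlinarith [key2]

/-- For `-1 ≤ γ ≤ 0`, `0 < u ≤ y`: `u^γ - y^γ ≤ (-γ) u^(γ-1) (y-u)`. -/
lemma sA3 {γ u y : ℝ} (hγ1 : -1 ≤ γ) (hγ : γ ≤ 0) (hu : 0 < u) (huy : u ≤ y) :
    u ^ γ - y ^ γ ≤ (-γ) * u ^ (γ - 1) * (y - u) := by
  set t := y / u with ht
  have ht1 : 1 ≤ t := (one_le_div hu).mpr huy
  have htpos : 0 < t := lt_of_lt_of_le one_pos ht1
  -- Bernoulli: t^(-γ) ≤ 1 + (-γ)(t-1)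
  have hb : (-1 : ℝ) ≤ t - 1 := by linarith
  have key := rpow_one_add_le_one_add_mul_self hb (by linarith : (0:ℝ) ≤ -γ) (by linarith : -γ ≤ 1)
  have h1 : 1 + (t - 1) = t := by ring
  rw [h1] at key
  -- deduce t^γ ≥ 1 + γ (t-1)
  have htg : 0 < t ^ (-γ) := rpow_pos_of_pos htpos _
  have hD : 0 < 1 + (-γ) * (t - 1) := lt_of_lt_of_le htg key
  have htγ : t ^ γ = (t ^ (-γ))⁻¹ := by
    rw [← rpow_neg htpos.le, neg_neg]
  have h2 : (1 + γ * (t - 1)) * t ^ (-γ) ≤ 1 := by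
    rcases le_or_gt (1 + γ * (t - 1)) 0 with h | h
    · have : (1 + γ * (t - 1)) * t ^ (-γ) ≤ 0 := mul_nonpos_of_nonpos_of_nonneg h htg.le
      linarith
    · have h3 : (1 + γ * (t - 1)) * t ^ (-γ) ≤ (1 + γ * (t - 1)) * (1 + (-γ) * (t - 1)) :=
        mul_le_mul_of_nonneg_left key h.le
      nlinarith [sq_nonneg (γ * (t - 1))]
  have hlow : 1 + γ * (t - 1) ≤ t ^ γ := by
    calc 1 + γ * (t - 1) = (1 + γ * (t - 1)) * t ^ (-γ) * (t ^ (-γ))⁻¹ := by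
          field_simp
      _ ≤ 1 * (t ^ (-γ))⁻¹ := mul_le_mul_of_nonneg_right h2 (by positivity)
      _ = t ^ γ := by rw [htγ]; ring
  -- multiply by u^γ
  have huγ : 0 < u ^ γ := rpow_pos_of_pos hu _
  have hyγ : y ^ γ = u ^ γ * t ^ γ := by
    rw [← mul_rpow hu.le htpos.le, ht]; field_simp
  have hum : u ^ (γ - 1) * u = u ^ γ := by
    rw [← rpow_add_one hu.ne' (γ - 1)]; ring_nf
  have e1 : u ^ γ * (t - 1) = u ^ (γ - 1) * (y - u) := by
    rw [← hum, ht]; field_simp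
  have := mul_le_mul_of_nonneg_left hlow huγ.le
  -- u^γ (1 + γ(t-1)) ≤ u^γ t^γ = y^γ
  nlinarith [this]

/-- `(x+y)^q ≤ 2^q (x^q + y^q)` for `q ≥ 0`. -/
lemma r2 {q x y : ℝ} (hq : 0 ≤ q) (hx : 0 ≤ x) (hy : 0 ≤ y) :
    (x + y) ^ q ≤ 2 ^ q * (x ^ q + y ^ q) := by
  rcases le_total x y with h | h
  · calc (x + y) ^ q ≤ (2 * y) ^ q := rpow_le_rpow (by linarith) (by linarith) hq
      _ = 2 ^ q * y ^ q := mul_rpow (by norm_num) hy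
      _ ≤ 2 ^ q * (x ^ q + y ^ q) := by
          have : (0:ℝ) ≤ x ^ q := rpow_nonneg hx q
          have h2 : (0:ℝ) ≤ (2:ℝ) ^ q := rpow_nonneg (by norm_num) q
          nlinarith
  · calc (x + y) ^ q ≤ (2 * x) ^ q := rpow_le_rpow (by linarith) (by linarith) hq
      _ = 2 ^ q * x ^ q := mul_rpow (by norm_num) hx
      _ ≤ 2 ^ q * (x ^ q + y ^ q) := by
          have : (0:ℝ) ≤ y ^ q := rpow_nonneg hy q
          have h2 : (0:ℝ) ≤ (2:ℝ) ^ q := rpow_nonneg (by norm_num) q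
          nlinarith

/-- `x^(p-2) * x^2 = x^p` for `x ≥ 0`, `p ≥ 2`. -/
lemma r0 {p x : ℝ} (hp : 2 ≤ p) (hx : 0 ≤ x) : x ^ (p - 2) * x ^ (2:ℕ) = x ^ p := by
  rcases eq_or_lt_of_le hx with h | h
  · rcases eq_or_lt_of_le hp with h2 | h2
    · simp [← h, ← h2]
    · rw [← h, zero_rpow (by linarith), zero_rpow (by linarith)]; ring
  · rw [← rpow_natCast x 2, ← rpow_add h]
    norm_num

/-- `x^(p-2) * y^2 ≤ x^p + y^p` for nonneg `x y`, `p ≥ 2`. -/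
lemma r3 {p x y : ℝ} (hp : 2 ≤ p) (hx : 0 ≤ x) (hy : 0 ≤ y) :
    x ^ (p - 2) * y ^ (2:ℕ) ≤ x ^ p + y ^ p := by
  have hxp : (0:ℝ) ≤ x ^ p := rpow_nonneg hx p
  have hyp : (0:ℝ) ≤ y ^ p := rpow_nonneg hy p
  rcases le_total x y with h | h
  · have h1 : x ^ (p - 2) ≤ y ^ (p - 2) := rpow_le_rpow hx h (by linarith)
    calc x ^ (p - 2) * y ^ (2:ℕ) ≤ y ^ (p - 2) * y ^ (2:ℕ) :=
          mul_le_mul_of_nonneg_right h1 (by positivity)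
      _ = y ^ p := r0 hp hy
      _ ≤ x ^ p + y ^ p := by linarith
  · have h1 : y ^ (2:ℕ) ≤ x ^ (2:ℕ) := pow_le_pow_left₀ hy h 2
    calc x ^ (p - 2) * y ^ (2:ℕ) ≤ x ^ (p - 2) * x ^ (2:ℕ) :=
          mul_le_mul_of_nonneg_left h1 (rpow_nonneg hx _)
      _ = x ^ p := r0 hp hx
      _ ≤ x ^ p + y ^ p := by linarith

/-- `t^q ≤ 1 + t^r` for `0 ≤ t`, `0 ≤ q ≤ r`. -/
lemma r4 {t q r : ℝ} (ht : 0 ≤ t) (hq : 0 ≤ q) (hqr : q ≤ r) : t ^ q ≤ 1 + t ^ r := by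
  have hr : (0:ℝ) ≤ t ^ r := rpow_nonneg ht r
  rcases le_total t 1 with h | h
  · have : t ^ q ≤ 1 := rpow_le_one ht h hq
    linarith
  · have : t ^ q ≤ t ^ r := rpow_le_rpow_of_exponent_le h hqr
    linarith

/-- `t^2 ≤ 1 + t^p` for `0 ≤ t`, `2 ≤ p`. -/
lemma r5 {t p : ℝ} (ht : 0 ≤ t) (hp : 2 ≤ p) : t ^ (2:ℕ) ≤ 1 + t ^ p := by
  have := r4 (q := 2) (r := p) ht (by norm_num) hp
  rwa [rpow_two] at this

end Scalar

section Vector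

variable {E : Type*} [NormedAddCommGroup E] [NormedSpace ℝ E]

noncomputable def Vgen (α : ℝ) (z : E) : E := (‖z‖ ^ α) • z

lemma norm_Vgen (α : ℝ) (z : E) : ‖Vgen α z‖ = ‖z‖ ^ α * ‖z‖ := by
  rw [Vgen, norm_smul, Real.norm_eq_abs, abs_of_nonneg (rpow_nonneg (norm_nonneg z) α)]

lemma vUpper {α : ℝ} (hα : 0 ≤ α) {z w : E} (h : ‖w‖ ≤ ‖z‖) :
    ‖Vgen α z - Vgen α w‖ ≤ (4 + α) * ‖z‖ ^ α * ‖z - w‖ := by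
  rcases eq_or_lt_of_le (norm_nonneg z) with hz | hz
  · have hz' : z = 0 := norm_eq_zero.mp hz.symm
    have hw' : w = 0 := norm_le_zero_iff.mp (h.trans hz.ge)
    simp [Vgen, hz', hw']
  · have hα' : ‖w‖ ^ α ≤ ‖z‖ ^ α := rpow_le_rpow (norm_nonneg w) h hα
    have hzα : (0:ℝ) ≤ ‖z‖ ^ α := rpow_nonneg (norm_nonneg z) _
    rcases le_or_gt ‖z‖ (2 * ‖z - w‖) with h2 | h2
    · have l1 : ‖Vgen α z - Vgen α w‖ ≤ ‖z‖ ^ α * ‖z‖ + ‖w‖ ^ α * ‖w‖ := by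
        calc ‖Vgen α z - Vgen α w‖ ≤ ‖Vgen α z‖ + ‖Vgen α w‖ := norm_sub_le _ _
          _ = ‖z‖ ^ α * ‖z‖ + ‖w‖ ^ α * ‖w‖ := by rw [norm_Vgen, norm_Vgen]
      have l2 : ‖w‖ ^ α * ‖w‖ ≤ ‖z‖ ^ α * ‖z‖ := mul_le_mul hα' h (norm_nonneg w) hzα
      have l3 : ‖z‖ ^ α * ‖z‖ ≤ ‖z‖ ^ α * (2 * ‖z - w‖) := mul_le_mul_of_nonneg_left h2 hzα
      have l4 : (0:ℝ) ≤ ‖z‖ ^ α * ‖z - w‖ := mul_nonneg hzα (norm_nonneg _)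
      nlinarith [mul_nonneg hα l4]
    · have hd : ‖z‖ - ‖w‖ ≤ ‖z - w‖ := by
        have := abs_norm_sub_norm_le z w
        have := abs_le.mp this
        linarith [this.2]
      have hw : ‖z‖ / 2 ≤ ‖w‖ := by linarith
      have hw0 : (0:ℝ) < ‖w‖ := lt_of_lt_of_le (by linarith) hw
      have hdecomp : Vgen α z - Vgen α w
          = (‖z‖ ^ α) • (z - w) + (‖z‖ ^ α - ‖w‖ ^ α) • w := by
        simp only [Vgen, smul_sub, sub_smul]; abel
      have l1 : ‖Vgen α z - Vgen α w‖ ≤ ‖z‖ ^ α * ‖z - w‖ + (‖z‖ ^ α - ‖w‖ ^ α) * ‖w‖ := by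
        rw [hdecomp]
        refine (norm_add_le _ _).trans ?_
        rw [norm_smul, norm_smul, Real.norm_eq_abs, Real.norm_eq_abs,
          abs_of_nonneg hzα, abs_of_nonneg (by linarith : (0:ℝ) ≤ ‖z‖ ^ α - ‖w‖ ^ α)]
      have l2 : (‖z‖ ^ α - ‖w‖ ^ α) * ‖w‖ ≤ α * ‖z‖ ^ α * ‖z - w‖ := by
        rcases le_or_gt α 1 with hα1 | hα1
        · have hA := sA2 hα hα1 hw0 h
          have hm : ‖w‖ ^ (α - 1) * ‖w‖ = ‖w‖ ^ α := by
            rw [← Real.rpow_add_one hw0.ne' (α - 1)]; ring_nf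
          calc (‖z‖ ^ α - ‖w‖ ^ α) * ‖w‖
              ≤ α * ‖w‖ ^ (α - 1) * (‖z‖ - ‖w‖) * ‖w‖ :=
                mul_le_mul_of_nonneg_right hA (norm_nonneg w)
            _ = α * (‖w‖ ^ (α - 1) * ‖w‖) * (‖z‖ - ‖w‖) := by ring
            _ = α * ‖w‖ ^ α * (‖z‖ - ‖w‖) := by rw [hm]
            _ ≤ α * ‖z‖ ^ α * ‖z - w‖ := by
                apply mul_le_mul (mul_le_mul_of_nonneg_left hα' hα) hd (by linarith)
                  (by positivity)
        · have hA := sA1 hα1.le (norm_nonneg w) h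
          have hm : ‖z‖ ^ (α - 1) * ‖z‖ = ‖z‖ ^ α := by
            rw [← Real.rpow_add_one hz.ne' (α - 1)]; ring_nf
          have hza : (0:ℝ) ≤ ‖z‖ ^ (α - 1) := rpow_nonneg (norm_nonneg z) _
          calc (‖z‖ ^ α - ‖w‖ ^ α) * ‖w‖
              ≤ α * ‖z‖ ^ (α - 1) * (‖z‖ - ‖w‖) * ‖w‖ :=
                mul_le_mul_of_nonneg_right hA (norm_nonneg w)
            _ ≤ α * ‖z‖ ^ (α - 1) * ‖z - w‖ * ‖z‖ := by
                apply mul_le_mul _ h (norm_nonneg w) _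
                · apply mul_le_mul_of_nonneg_left hd (by positivity)
                · positivity
            _ = α * (‖z‖ ^ (α - 1) * ‖z‖) * ‖z - w‖ := by ring
            _ = α * ‖z‖ ^ α * ‖z - w‖ := by rw [hm]
      have l4 : (0:ℝ) ≤ ‖z‖ ^ α * ‖z - w‖ := mul_nonneg hzα (norm_nonneg _)
      nlinarith

lemma vUpper' {α : ℝ} (hα : 0 ≤ α) (z w : E) :
    ‖Vgen α z - Vgen α w‖ ≤ (4 + α) * (‖z‖ + ‖w‖) ^ α * ‖z - w‖ := by
  have hkey : ∀ z w : E, ‖w‖ ≤ ‖z‖ →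
      ‖Vgen α z - Vgen α w‖ ≤ (4 + α) * (‖z‖ + ‖w‖) ^ α * ‖z - w‖ := by
    intro z w h
    refine (vUpper hα h).trans ?_
    have h1 : ‖z‖ ^ α ≤ (‖z‖ + ‖w‖) ^ α :=
      rpow_le_rpow (norm_nonneg z) (by linarith [norm_nonneg w]) hα
    have : (0:ℝ) ≤ 4 + α := by linarith
    apply mul_le_mul_of_nonneg_right _ (norm_nonneg _)
    exact mul_le_mul_of_nonneg_left h1 this
  rcases le_total ‖w‖ ‖z‖ with h | h
  · exact hkey z w h
  · have := hkey w z h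
    rwa [norm_sub_rev (Vgen α w), norm_sub_rev w z, add_comm ‖w‖ ‖z‖] at this

lemma vLowerAux {γ : ℝ} (hγ1 : -1 < γ) (hγ : γ ≤ 0) {z w : E} (h : ‖w‖ ≤ ‖z‖)
    (hz : 0 < ‖z‖) :
    ‖Vgen γ z - Vgen γ w‖ ≤ (5 + (-γ) * 2 ^ (-γ)) * ‖z‖ ^ γ * ‖z - w‖ := by
  have hzγ : (0:ℝ) < ‖z‖ ^ γ := rpow_pos_of_pos hz _
  have hcγ : (0:ℝ) ≤ (-γ) * 2 ^ (-γ) :=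
    mul_nonneg (by linarith) (rpow_nonneg (by norm_num) _)
  rcases le_or_gt ‖z‖ (2 * ‖z - w‖) with h2 | h2
  · have l1 : ‖Vgen γ z - Vgen γ w‖ ≤ ‖z‖ ^ γ * ‖z‖ + ‖w‖ ^ γ * ‖w‖ := by
      calc ‖Vgen γ z - Vgen γ w‖ ≤ ‖Vgen γ z‖ + ‖Vgen γ w‖ := norm_sub_le _ _
        _ = ‖z‖ ^ γ * ‖z‖ + ‖w‖ ^ γ * ‖w‖ := by rw [norm_Vgen, norm_Vgen]
    have l2 : ‖w‖ ^ γ * ‖w‖ ≤ ‖z‖ ^ γ * ‖z‖ := by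
      rcases eq_or_lt_of_le (norm_nonneg w) with hw | hw
      · rw [← hw, mul_zero]; positivity
      · rw [← Real.rpow_add_one hw.ne' γ, ← Real.rpow_add_one hz.ne' γ]
        exact rpow_le_rpow (norm_nonneg w) h (by linarith)
    have l3 : ‖z‖ ^ γ * ‖z‖ ≤ ‖z‖ ^ γ * (2 * ‖z - w‖) := mul_le_mul_of_nonneg_left h2 hzγ.le
    have l4 : (0:ℝ) ≤ ‖z‖ ^ γ * ‖z - w‖ := mul_nonneg hzγ.le (norm_nonneg _)
    nlinarith [mul_nonneg hcγ l4]
  · have hd : ‖z‖ - ‖w‖ ≤ ‖z - w‖ := by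
      have := abs_le.mp (abs_norm_sub_norm_le z w); linarith [this.2]
    have hw : ‖z‖ / 2 ≤ ‖w‖ := by linarith
    have hw0 : (0:ℝ) < ‖w‖ := lt_of_lt_of_le (by linarith) hw
    have hγz : ‖z‖ ^ γ ≤ ‖w‖ ^ γ := rpow_le_rpow_of_nonpos hw0 h hγ
    have hdecomp : Vgen γ z - Vgen γ w
        = (‖z‖ ^ γ) • (z - w) + (‖z‖ ^ γ - ‖w‖ ^ γ) • w := by
      simp only [Vgen, smul_sub, sub_smul]; abel
    have l1 : ‖Vgen γ z - Vgen γ w‖ ≤ ‖z‖ ^ γ * ‖z - w‖ + (‖w‖ ^ γ - ‖z‖ ^ γ) * ‖w‖ := by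
      rw [hdecomp]
      refine (norm_add_le _ _).trans ?_
      rw [norm_smul, norm_smul, Real.norm_eq_abs, Real.norm_eq_abs,
        abs_of_nonneg hzγ.le, abs_of_nonpos (by linarith : ‖z‖ ^ γ - ‖w‖ ^ γ ≤ 0)]
      rw [neg_sub]
    have l2 : (‖w‖ ^ γ - ‖z‖ ^ γ) * ‖w‖ ≤ (-γ) * 2 ^ (-γ) * (‖z‖ ^ γ * ‖z - w‖) := by
      have hA := sA3 hγ1.le hγ hw0 h
      have hm : ‖w‖ ^ (γ - 1) * ‖w‖ = ‖w‖ ^ γ := by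
        rw [← Real.rpow_add_one hw0.ne' (γ - 1)]; ring_nf
      have step1 : (‖w‖ ^ γ - ‖z‖ ^ γ) * ‖w‖ ≤ (-γ) * ‖w‖ ^ γ * ‖z - w‖ := by
        calc (‖w‖ ^ γ - ‖z‖ ^ γ) * ‖w‖
            ≤ (-γ) * ‖w‖ ^ (γ - 1) * (‖z‖ - ‖w‖) * ‖w‖ :=
              mul_le_mul_of_nonneg_right hA (norm_nonneg w)
          _ = (-γ) * (‖w‖ ^ (γ - 1) * ‖w‖) * (‖z‖ - ‖w‖) := by ring
          _ = (-γ) * ‖w‖ ^ γ * (‖z‖ - ‖w‖) := by rw [hm]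
          _ ≤ (-γ) * ‖w‖ ^ γ * ‖z - w‖ := by
              apply mul_le_mul_of_nonneg_left hd
                (mul_nonneg (by linarith) (rpow_nonneg (norm_nonneg w) _))
      have step2 : ‖w‖ ^ γ ≤ 2 ^ (-γ) * ‖z‖ ^ γ := by
        have := rpow_le_rpow_of_nonpos (by linarith : (0:ℝ) < ‖z‖ / 2) hw hγ
        calc ‖w‖ ^ γ ≤ (‖z‖ / 2) ^ γ := this
          _ = ‖z‖ ^ γ / 2 ^ γ := Real.div_rpow (norm_nonneg z) (by norm_num) γ
          _ = 2 ^ (-γ) * ‖z‖ ^ γ := by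
              rw [Real.rpow_neg (by norm_num : (0:ℝ) ≤ 2)]; ring
      calc (‖w‖ ^ γ - ‖z‖ ^ γ) * ‖w‖ ≤ (-γ) * ‖w‖ ^ γ * ‖z - w‖ := step1
        _ ≤ (-γ) * (2 ^ (-γ) * ‖z‖ ^ γ) * ‖z - w‖ := by
            apply mul_le_mul_of_nonneg_right _ (norm_nonneg _)
            exact mul_le_mul_of_nonneg_left step2 (by linarith)
        _ = (-γ) * 2 ^ (-γ) * (‖z‖ ^ γ * ‖z - w‖) := by ring
    have l4 : (0:ℝ) ≤ ‖z‖ ^ γ * ‖z - w‖ := mul_nonneg hzγ.le (norm_nonneg _)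
    nlinarith

lemma vgen_comp {α γ : ℝ} (hc : (γ + 1) * α + γ = 0) (y : E) :
    Vgen α (Vgen γ y) = y := by
  by_cases hy : y = 0
  · simp [Vgen, hy]
  · have hy0 : (0:ℝ) < ‖y‖ := norm_pos_iff.mpr hy
    rw [Vgen, Vgen, norm_smul, smul_smul, Real.norm_eq_abs,
      abs_of_nonneg (rpow_nonneg (norm_nonneg y) γ),
      ← Real.rpow_add_one hy0.ne' γ]
    have he : (‖y‖ ^ (γ + 1)) ^ α * ‖y‖ ^ γ = 1 := by
      rw [← Real.rpow_mul (norm_nonneg y), ← Real.rpow_add hy0, hc, Real.rpow_zero]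
    rw [he, one_smul]

lemma vLower {p : ℝ} (hp : 2 ≤ p) : ∃ C : ℝ, 0 < C ∧ ∀ z w : E,
    (‖z‖ + ‖w‖) ^ ((p - 2) / 2) * ‖z - w‖
      ≤ C * ‖Vgen ((p - 2) / 2) z - Vgen ((p - 2) / 2) w‖ := by
  have hp0 : (0:ℝ) < p := by linarith
  set α := (p - 2) / 2 with hα
  set γ := (2 - p) / p with hγdef
  have hα0 : 0 ≤ α := by
    rw [hα]; exact div_nonneg (by linarith) (by norm_num)
  have hγ1 : -1 < γ := by rw [hγdef, lt_div_iff₀ hp0]; linarith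
  have hγ0 : γ ≤ 0 := div_nonpos_of_nonpos_of_nonneg (by linarith) hp0.le
  have hcγ : (0:ℝ) ≤ (-γ) * 2 ^ (-γ) :=
    mul_nonneg (by linarith) (rpow_nonneg (by norm_num) _)
  refine ⟨2 ^ α * (5 + (-γ) * 2 ^ (-γ)),
    mul_pos (rpow_pos_of_pos two_pos α) (by linarith), ?_⟩
  have hkey : ∀ z w : E, ‖w‖ ≤ ‖z‖ →
      (‖z‖ + ‖w‖) ^ α * ‖z - w‖
        ≤ 2 ^ α * (5 + (-γ) * 2 ^ (-γ)) * ‖Vgen α z - Vgen α w‖ := by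
    intro z w h
    rcases eq_or_lt_of_le (norm_nonneg z) with hz | hz
    · have hz' : z = 0 := norm_eq_zero.mp hz.symm
      have hw' : w = 0 := norm_le_zero_iff.mp (h.trans hz.ge)
      simp [Vgen, hz', hw']
    · have hZn : ‖Vgen α z‖ = ‖z‖ ^ α * ‖z‖ := norm_Vgen _ _
      have hZpos : (0:ℝ) < ‖Vgen α z‖ := by rw [hZn]; positivity
      have hWZ : ‖Vgen α w‖ ≤ ‖Vgen α z‖ := by
        rw [norm_Vgen, norm_Vgen]
        exact mul_le_mul (rpow_le_rpow (norm_nonneg w) h hα0) h (norm_nonneg w)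
          (rpow_nonneg (norm_nonneg z) _)
      have hc1 : (α + 1) * γ + α = 0 := by
        rw [hα, hγdef]; field_simp; ring
      have hid1 : Vgen γ (Vgen α z) = z := vgen_comp hc1 z
      have hid2 : Vgen γ (Vgen α w) = w := vgen_comp hc1 w
      have key := vLowerAux hγ1 hγ0 hWZ hZpos
      rw [hid1, hid2] at key
      have hZγ : ‖Vgen α z‖ ^ γ = ‖z‖ ^ (-α) := by
        rw [hZn, ← Real.rpow_add_one hz.ne' α, ← Real.rpow_mul (norm_nonneg z)]
        congr 1
        rw [hα, hγdef]; field_simp; ring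
      have hone : ‖z‖ ^ α * ‖z‖ ^ (-α) = 1 := by
        rw [← Real.rpow_add hz]; simp
      have hCγpos : (0:ℝ) < 5 + (-γ) * 2 ^ (-γ) := by linarith
      calc (‖z‖ + ‖w‖) ^ α * ‖z - w‖
          ≤ (2 * ‖z‖) ^ α * ‖z - w‖ := by
            apply mul_le_mul_of_nonneg_right _ (norm_nonneg _)
            exact rpow_le_rpow (by positivity) (by linarith) hα0
        _ = 2 ^ α * ‖z‖ ^ α * ‖z - w‖ := by
            rw [mul_rpow (by norm_num : (0:ℝ) ≤ 2) (norm_nonneg z)]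
        _ ≤ 2 ^ α * ‖z‖ ^ α *
            ((5 + (-γ) * 2 ^ (-γ)) * ‖z‖ ^ (-α) * ‖Vgen α z - Vgen α w‖) := by
            apply mul_le_mul_of_nonneg_left _ (by positivity)
            rw [← hZγ]; exact key
        _ = 2 ^ α * (5 + (-γ) * 2 ^ (-γ)) * (‖z‖ ^ α * ‖z‖ ^ (-α)) *
            ‖Vgen α z - Vgen α w‖ := by ring
        _ = 2 ^ α * (5 + (-γ) * 2 ^ (-γ)) * ‖Vgen α z - Vgen α w‖ := by
            rw [hone]; ring
  intro z w
  rcases le_total ‖w‖ ‖z‖ with h | h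
  · exact hkey z w h
  · have := hkey w z h
    rwa [norm_sub_rev (Vgen α w), norm_sub_rev w z, add_comm ‖w‖ ‖z‖] at this


section Extra
variable {E : Type*} [NormedAddCommGroup E] [NormedSpace ℝ E]

lemma norm_Vgen_eq {p : ℝ} (hp : 2 ≤ p) (z : E) :
    ‖Vgen ((p-2)/2) z‖ = ‖z‖ ^ (p/2) := by
  have hp0 : (0:ℝ) < p := by linarith
  rw [norm_Vgen]
  rcases eq_or_lt_of_le (norm_nonneg z) with h | h
  · rw [← h, mul_zero, Real.zero_rpow (by linarith : (0:ℝ) < p/2).ne']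
  · rw [← Real.rpow_add_one h.ne']
    congr 1; ring

lemma norm_Vgen_sq {p : ℝ} (hp : 2 ≤ p) (z : E) :
    ‖Vgen ((p-2)/2) z‖ ^ (2:ℕ) = ‖z‖ ^ p := by
  rw [norm_Vgen_eq hp, ← Real.rpow_natCast (‖z‖ ^ (p/2)) 2, ← Real.rpow_mul (norm_nonneg z)]
  congr 1; push_cast; ring


end Extra

section TwoSided

variable {E : Type*} [NormedAddCommGroup E] [NormedSpace ℝ E]

lemma two_sided {p : ℝ} (hp : 2 ≤ p) : ∃ cl cu : ℝ, 0 < cl ∧ 0 < cu ∧ ∀ z w : E,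
    cl * (‖w‖ ^ (p - 2) * ‖z - w‖ ^ (2:ℕ) + ‖z - w‖ ^ p)
        ≤ ‖Vgen ((p - 2) / 2) z - Vgen ((p - 2) / 2) w‖ ^ (2:ℕ)
    ∧ ‖Vgen ((p - 2) / 2) z - Vgen ((p - 2) / 2) w‖ ^ (2:ℕ)
        ≤ cu * (‖w‖ ^ (p - 2) * ‖z - w‖ ^ (2:ℕ) + ‖z - w‖ ^ p) := by
  obtain ⟨C, hC, hCl⟩ := vLower (E := E) hp
  set α := (p - 2) / 2 with hα
  have hα0 : 0 ≤ α := div_nonneg (by linarith) (by norm_num)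
  refine ⟨(2 * C ^ (2:ℕ))⁻¹, (4 + α) ^ (2:ℕ) * (2 ^ (p-2) * 2 ^ (p-2)),
    by positivity, by positivity, ?_⟩
  intro z w
  set S := ‖z‖ + ‖w‖ with hS
  have hS0 : (0:ℝ) ≤ S := add_nonneg (norm_nonneg z) (norm_nonneg w)
  have hSsq : (S ^ α) ^ (2:ℕ) = S ^ (p - 2) := by
    rw [← Real.rpow_natCast (S ^ α) 2, ← Real.rpow_mul hS0]
    have h2 : α * ((2:ℕ):ℝ) = p - 2 := by push_cast; rw [hα]; ring
    rw [h2]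
  have hzw : ‖z - w‖ ≤ S := norm_sub_le z w
  have hVV : (0:ℝ) ≤ ‖Vgen α z - Vgen α w‖ := norm_nonneg _
  constructor
  · -- lower bound
    have hΦle : ‖w‖ ^ (p-2) * ‖z-w‖ ^ (2:ℕ) + ‖z-w‖ ^ p
        ≤ 2 * (S ^ (p-2) * ‖z-w‖ ^ (2:ℕ)) := by
      have h1 : ‖w‖ ^ (p-2) ≤ S ^ (p-2) :=
        rpow_le_rpow (norm_nonneg w) (by rw [hS]; linarith [norm_nonneg z]) (by linarith)
      have h3 : ‖z-w‖ ^ p ≤ S ^ (p-2) * ‖z-w‖ ^ (2:ℕ) := by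
        rw [← r0 hp (norm_nonneg (z-w))]
        exact mul_le_mul_of_nonneg_right
          (rpow_le_rpow (norm_nonneg _) hzw (by linarith)) (by positivity)
      nlinarith [mul_le_mul_of_nonneg_right h1 (pow_nonneg (norm_nonneg (z-w)) 2)]
    have hlow2 : S ^ (p-2) * ‖z-w‖ ^ (2:ℕ)
        ≤ C ^ (2:ℕ) * ‖Vgen α z - Vgen α w‖ ^ (2:ℕ) := by
      have hsq := pow_le_pow_left₀
        (mul_nonneg (rpow_nonneg hS0 α) (norm_nonneg (z - w))) (hCl z w) 2
      calc S ^ (p-2) * ‖z-w‖ ^ (2:ℕ) = (S ^ α * ‖z-w‖) ^ (2:ℕ) := by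
            rw [mul_pow, hSsq]
        _ ≤ (C * ‖Vgen α z - Vgen α w‖) ^ (2:ℕ) := hsq
        _ = C ^ (2:ℕ) * ‖Vgen α z - Vgen α w‖ ^ (2:ℕ) := by ring
    have hCpos : (0:ℝ) < 2 * C ^ (2:ℕ) := by positivity
    rw [inv_mul_le_iff₀ hCpos]
    calc ‖w‖ ^ (p-2) * ‖z-w‖ ^ (2:ℕ) + ‖z-w‖ ^ p
        ≤ 2 * (S ^ (p-2) * ‖z-w‖ ^ (2:ℕ)) := hΦle
      _ ≤ 2 * (C ^ (2:ℕ) * ‖Vgen α z - Vgen α w‖ ^ (2:ℕ)) := by linarith [hlow2]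
      _ = 2 * C ^ (2:ℕ) * ‖Vgen α z - Vgen α w‖ ^ (2:ℕ) := by ring
  · -- upper bound
    have hup : ‖Vgen α z - Vgen α w‖ ^ (2:ℕ)
        ≤ (4+α) ^ (2:ℕ) * (S ^ (p-2) * ‖z - w‖ ^ (2:ℕ)) := by
      calc ‖Vgen α z - Vgen α w‖ ^ (2:ℕ)
          ≤ ((4 + α) * S ^ α * ‖z - w‖) ^ (2:ℕ) :=
            pow_le_pow_left₀ (norm_nonneg _) (vUpper' hα0 z w) 2
        _ = (4+α) ^ (2:ℕ) * ((S ^ α) ^ (2:ℕ) * ‖z - w‖ ^ (2:ℕ)) := by ring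
        _ = (4+α) ^ (2:ℕ) * (S ^ (p-2) * ‖z - w‖ ^ (2:ℕ)) := by rw [hSsq]
    have hSb : S ^ (p - 2) ≤ 2 ^ (p-2) * 2 ^ (p-2) * (‖w‖ ^ (p-2) + ‖z-w‖ ^ (p-2)) := by
      have hz1 : ‖z‖ ≤ ‖w‖ + ‖z - w‖ := by
        calc ‖z‖ = ‖w + (z - w)‖ := by congr 1; abel
          _ ≤ ‖w‖ + ‖z - w‖ := norm_add_le _ _
      calc S ^ (p-2) ≤ (2 * (‖w‖ + ‖z - w‖)) ^ (p-2) := by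
            apply rpow_le_rpow hS0 _ (by linarith)
            rw [hS]; linarith [norm_nonneg w, norm_nonneg (z-w)]
        _ = 2 ^ (p-2) * (‖w‖ + ‖z - w‖) ^ (p-2) :=
            mul_rpow (by norm_num) (by positivity)
        _ ≤ 2 ^ (p-2) * (2 ^ (p-2) * (‖w‖ ^ (p-2) + ‖z-w‖ ^ (p-2))) :=
            mul_le_mul_of_nonneg_left
              (r2 (by linarith) (norm_nonneg w) (norm_nonneg _))
              (rpow_nonneg (by norm_num) _)
        _ = 2 ^ (p-2) * 2 ^ (p-2) * (‖w‖ ^ (p-2) + ‖z-w‖ ^ (p-2)) := by ring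
    calc ‖Vgen α z - Vgen α w‖ ^ (2:ℕ)
        ≤ (4+α) ^ (2:ℕ) * (S ^ (p-2) * ‖z - w‖ ^ (2:ℕ)) := hup
      _ ≤ (4+α) ^ (2:ℕ) * ((2 ^ (p-2) * 2 ^ (p-2) * (‖w‖ ^ (p-2) + ‖z-w‖ ^ (p-2)))
            * ‖z - w‖ ^ (2:ℕ)) := by
          apply mul_le_mul_of_nonneg_left _ (by positivity)
          exact mul_le_mul_of_nonneg_right hSb (by positivity)
      _ = (4+α) ^ (2:ℕ) * (2 ^ (p-2) * 2 ^ (p-2)) *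
            (‖w‖ ^ (p-2) * ‖z-w‖ ^ (2:ℕ) + ‖z-w‖ ^ (p-2) * ‖z-w‖ ^ (2:ℕ)) := by ring
      _ = (4+α) ^ (2:ℕ) * (2 ^ (p-2) * 2 ^ (p-2)) *
            (‖w‖ ^ (p-2) * ‖z-w‖ ^ (2:ℕ) + ‖z-w‖ ^ p) := by
          rw [r0 hp (norm_nonneg (z-w))]

end TwoSided

lemma shift_lemma {p a b U V W : ℝ} (hp : 2 ≤ p) (ha : 0 ≤ a) (hb : 0 ≤ b)
    (hU : 0 ≤ U) (hV : 0 ≤ V) (hW : 0 ≤ W) (hab : a ≤ b + V) (hWUV : W ≤ U + V) :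
    a ^ (p-2) * W ^ (2:ℕ) + W ^ p
      ≤ 5 * 2 ^ p * ((b ^ (p-2) * U ^ (2:ℕ) + U ^ p) + (b ^ (p-2) * V ^ (2:ℕ) + V ^ p)) := by
  have hP : (0:ℝ) ≤ 2 ^ p := rpow_nonneg (by norm_num) p
  have hbp : (0:ℝ) ≤ b ^ (p-2) := rpow_nonneg hb _
  have hVp2 : (0:ℝ) ≤ V ^ (p-2) := rpow_nonneg hV _
  have hUp : (0:ℝ) ≤ U ^ p := rpow_nonneg hU p
  have hVp : (0:ℝ) ≤ V ^ p := rpow_nonneg hV p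
  -- step bounds
  have hstep : a ^ (p-2) ≤ 2 ^ p * (b ^ (p-2) + V ^ (p-2)) := by
    calc a ^ (p-2) ≤ (b + V) ^ (p-2) := rpow_le_rpow ha hab (by linarith)
      _ ≤ 2 ^ (p-2) * (b ^ (p-2) + V ^ (p-2)) := r2 (by linarith) hb hV
      _ ≤ 2 ^ p * (b ^ (p-2) + V ^ (p-2)) :=
          mul_le_mul_of_nonneg_right
            (rpow_le_rpow_of_exponent_le one_le_two (by linarith)) (by positivity)
  have hW2 : W ^ (2:ℕ) ≤ 2 * U ^ (2:ℕ) + 2 * V ^ (2:ℕ) := by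
    nlinarith [pow_le_pow_left₀ hW hWUV 2, sq_nonneg (U - V)]
  have hWp : W ^ p ≤ 2 ^ p * (U ^ p + V ^ p) := by
    calc W ^ p ≤ (U + V) ^ p := rpow_le_rpow hW hWUV (by linarith)
      _ ≤ 2 ^ p * (U ^ p + V ^ p) := r2 (by linarith) hU hV
  have h1 : a ^ (p-2) * W ^ (2:ℕ)
      ≤ 2 ^ p * (b ^ (p-2) + V ^ (p-2)) * (2 * U ^ (2:ℕ) + 2 * V ^ (2:ℕ)) :=
    mul_le_mul hstep hW2 (by positivity) (by positivity)
  have h1e : 2 ^ p * (b ^ (p-2) + V ^ (p-2)) * (2 * U ^ (2:ℕ) + 2 * V ^ (2:ℕ))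
      = 2 * 2 ^ p * (b ^ (p-2) * U ^ (2:ℕ)) + 2 * 2 ^ p * (b ^ (p-2) * V ^ (2:ℕ))
        + 2 * 2 ^ p * (V ^ (p-2) * U ^ (2:ℕ)) + 2 * 2 ^ p * (V ^ (p-2) * V ^ (2:ℕ)) := by
    ring
  have hr3 : V ^ (p-2) * U ^ (2:ℕ) ≤ V ^ p + U ^ p := r3 hp hV hU
  have hr0 : V ^ (p-2) * V ^ (2:ℕ) = V ^ p := r0 hp hV
  have hA : 2 * 2 ^ p * (V ^ (p-2) * U ^ (2:ℕ)) ≤ 2 * 2 ^ p * (V ^ p + U ^ p) :=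
    mul_le_mul_of_nonneg_left hr3 (by positivity)
  have hx1 : (0:ℝ) ≤ 2 ^ p * (b ^ (p-2) * U ^ (2:ℕ)) := by positivity
  have hx2 : (0:ℝ) ≤ 2 ^ p * (b ^ (p-2) * V ^ (2:ℕ)) := by positivity
  have hx3 : (0:ℝ) ≤ 2 ^ p * U ^ p := by positivity
  have hx4 : (0:ℝ) ≤ 2 ^ p * V ^ p := by positivity
  rw [h1e, hr0] at h1
  linarith [h1, hA, hWp, hx1, hx2, hx3, hx4]


noncomputable def Vmap {n N : ℕ} (p : ℝ)
    (z : EuclideanSpace ℝ (Fin n) →L[ℝ] EuclideanSpace ℝ (Fin N)) :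
    EuclideanSpace ℝ (Fin n) →L[ℝ] EuclideanSpace ℝ (Fin N) :=
  (‖z‖ ^ ((p - 2) / 2)) • z

set_option maxHeartbeats 2000000 in
theorem stmt10 (n N : ℕ) (p : ℝ) (hp : 2 ≤ p) :
    ∃ c₁ c₂ : ℝ, 0 < c₁ ∧ 0 < c₂ ∧
      ∀ (x₀ : EuclideanSpace ℝ (Fin n)) (ρ : ℝ), 0 < ρ →
        ∀ w : EuclideanSpace ℝ (Fin n) → EuclideanSpace ℝ (Fin N),
          Differentiable ℝ w →
          IntegrableOn (fun x => fderiv ℝ w x) (Metric.ball x₀ ρ) →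
          IntegrableOn (fun x => ‖fderiv ℝ w x‖ ^ p) (Metric.ball x₀ ρ) →
          c₁ * ((⨍ x in Metric.ball x₀ ρ,
                  (‖(⨍ y in Metric.ball x₀ ρ, fderiv ℝ w y)‖ ^ (p - 2) *
                      ‖fderiv ℝ w x - (⨍ y in Metric.ball x₀ ρ, fderiv ℝ w y)‖ ^ 2 +
                    ‖fderiv ℝ w x - (⨍ y in Metric.ball x₀ ρ, fderiv ℝ w y)‖ ^ p)) ^
                (1 / p)) ^ (p / 2) ≤
            (⨍ x in Metric.ball x₀ ρ,
                ‖Vmap p (fderiv ℝ w x) -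
                    (⨍ y in Metric.ball x₀ ρ, Vmap p (fderiv ℝ w y))‖ ^ 2) ^ (1 / (2:ℝ)) ∧
          (⨍ x in Metric.ball x₀ ρ,
              ‖Vmap p (fderiv ℝ w x) -
                  (⨍ y in Metric.ball x₀ ρ, Vmap p (fderiv ℝ w y))‖ ^ 2) ^ (1 / (2:ℝ)) ≤
            c₂ * ((⨍ x in Metric.ball x₀ ρ,
                    (‖(⨍ y in Metric.ball x₀ ρ, fderiv ℝ w y)‖ ^ (p - 2) *
                        ‖fderiv ℝ w x - (⨍ y in Metric.ball x₀ ρ, fderiv ℝ w y)‖ ^ 2 +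
                      ‖fderiv ℝ w x - (⨍ y in Metric.ball x₀ ρ, fderiv ℝ w y)‖ ^ p)) ^
                  (1 / p)) ^ (p / 2) := by
  have hp0 : (0:ℝ) < p := by linarith
  obtain ⟨cl, cu, hcl, hcu, hlu⟩ :=
    two_sided (E := EuclideanSpace ℝ (Fin n) →L[ℝ] EuclideanSpace ℝ (Fin N)) hp
  set K₃ : ℝ := 5 * 2 ^ p with hK₃
  have hK₃pos : 0 < K₃ := by rw [hK₃]; positivity
  set KL : ℝ := (2 * K₃ * cl⁻¹)⁻¹ with hKL
  have hKLpos : 0 < KL := by rw [hKL]; positivity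
  set KU : ℝ := 4 * cu with hKU
  have hKUpos : 0 < KU := by rw [hKU]; positivity
  refine ⟨KL ^ (1/(2:ℝ)), KU ^ (1/(2:ℝ)), rpow_pos_of_pos hKLpos _,
    rpow_pos_of_pos hKUpos _, ?_⟩
  intro x₀ ρ hρ w hw hint hintp
  set B := Metric.ball x₀ ρ with hBdef
  have hBvol_pos : 0 < volume B := Metric.measure_ball_pos volume x₀ hρ
  have hBvol_lt : volume B < ⊤ := measure_ball_lt_top
  haveI hfin : IsFiniteMeasure (volume.restrict B) :=
    ⟨by rw [Measure.restrict_apply_univ]; exact hBvol_lt⟩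
  haveI hnz : NeZero (volume.restrict B) :=
    ⟨by rw [Ne, Measure.restrict_eq_zero]; exact hBvol_pos.ne'⟩
  set ν : Measure (EuclideanSpace ℝ (Fin n)) :=
    ((volume.restrict B) Set.univ)⁻¹ • volume.restrict B with hν
  haveI hprob : IsProbabilityMeasure ν := by rw [hν]; infer_instance
  haveI hν0 : NeZero ν := ⟨by
    intro h
    have h1 : ν Set.univ = 1 := measure_univ
    rw [h] at h1; simp at h1⟩
  have hνuniv : ν.real Set.univ = 1 := by simp
  have hcne : ((volume.restrict B) Set.univ)⁻¹ ≠ 0 :=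
    ENNReal.inv_ne_zero.mpr (measure_ne_top _ _)
  have hcnetop : ((volume.restrict B) Set.univ)⁻¹ ≠ ⊤ := by
    rw [ENNReal.inv_ne_top, Measure.restrict_apply_univ]; exact hBvol_pos.ne'
  set g := fderiv ℝ w with hgdef
  have htransV : ∀ (f : EuclideanSpace ℝ (Fin n) →
        (EuclideanSpace ℝ (Fin n) →L[ℝ] EuclideanSpace ℝ (Fin N))),
      Integrable f (volume.restrict B) → Integrable f ν := fun f hf => by
    rw [hν]; exact Integrable.smul_measure (ε := EuclideanSpace ℝ (Fin n) →L[ℝ] EuclideanSpace ℝ (Fin N)) hf hcnetop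
  have htransR : ∀ (f : EuclideanSpace ℝ (Fin n) → ℝ),
      Integrable f (volume.restrict B) → Integrable f ν := fun f hf => by
    rw [hν]; exact hf.smul_measure hcnetop
  have hgsm : StronglyMeasurable g := (measurable_fderiv ℝ w).stronglyMeasurable
  have hgν : Integrable g ν := htransV _ hint
  have hgpν : Integrable (fun x => ‖g x‖ ^ p) ν := htransR _ hintp
  -- Jensen (square) helper
  have hJ2gen : ∀ u : EuclideanSpace ℝ (Fin n) → ℝ, Integrable u ν →
      Integrable (fun x => (u x) ^ (2:ℕ)) ν →
      (∫ x, u x ∂ν) ^ (2:ℕ) ≤ ∫ x, (u x) ^ (2:ℕ) ∂ν := by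
    intro u h1 h2
    have hJ := (Even.convexOn_pow (by norm_num : Even 2)).map_average_le
      ((continuous_pow 2).continuousOn) isClosed_univ
      (Filter.Eventually.of_forall fun x => Set.mem_univ _) h1 h2
    rwa [average_eq_integral, average_eq_integral] at hJ
  -- integrability of the building blocks
  have hnormc : ∀ c : EuclideanSpace ℝ (Fin n) →L[ℝ] EuclideanSpace ℝ (Fin N),
      Measurable fun x => ‖g x - c‖ :=
    fun c => ((hgsm.sub stronglyMeasurable_const).norm).measurable
  have hint_p : ∀ c, Integrable (fun x => ‖g x - c‖ ^ p) ν := by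
    intro c
    refine Integrable.mono'
      ((hgpν.const_mul (2^p)).add (integrable_const (2^p * ‖c‖^p))) ?_ ?_
    · exact (((Real.continuous_rpow_const hp0.le).measurable).comp
        (hnormc c)).aestronglyMeasurable
    · filter_upwards with x
      have h1 : ‖g x - c‖ ≤ ‖g x‖ + ‖c‖ := norm_sub_le _ _
      have h2 : ‖g x - c‖ ^ p ≤ (‖g x‖ + ‖c‖) ^ p :=
        rpow_le_rpow (norm_nonneg _) h1 hp0.le
      have h3 := r2 (q := p) hp0.le (norm_nonneg (g x)) (norm_nonneg c)
      rw [Real.norm_eq_abs, abs_of_nonneg (rpow_nonneg (norm_nonneg _) _)]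
      calc ‖g x - c‖ ^ p ≤ 2^p * (‖g x‖^p + ‖c‖^p) := h2.trans h3
        _ = 2^p * ‖g x‖^p + 2^p * ‖c‖^p := by ring
  have hint_2 : ∀ c, Integrable (fun x => ‖g x - c‖ ^ (2:ℕ)) ν := by
    intro c
    refine Integrable.mono' ((integrable_const 1).add (hint_p c))
      (((hnormc c).pow_const 2).aestronglyMeasurable) ?_
    filter_upwards with x
    rw [Real.norm_eq_abs, abs_of_nonneg (by positivity)]
    exact r5 (norm_nonneg _) hp
  have hint_1 : ∀ c, Integrable (fun x => ‖g x - c‖) ν := by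
    intro c
    refine Integrable.mono' ((integrable_const 1).add (hint_p c))
      ((hnormc c).aestronglyMeasurable) ?_
    filter_upwards with x
    rw [Real.norm_eq_abs, abs_of_nonneg (norm_nonneg _)]
    have := r4 (t := ‖g x - c‖) (norm_nonneg _) (by norm_num) (by linarith : (1:ℝ) ≤ p)
    rwa [Real.rpow_one] at this
  have hVmap_eq : ∀ z : EuclideanSpace ℝ (Fin n) →L[ℝ] EuclideanSpace ℝ (Fin N),
      Vmap p z = Vgen ((p-2)/2) z := fun z => rfl
  have hVgsm : StronglyMeasurable (fun x => Vmap p (g x)) := by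
    have hc : Continuous (fun z : EuclideanSpace ℝ (Fin n) →L[ℝ] EuclideanSpace ℝ (Fin N) =>
        Vgen ((p-2)/2) z) := by
      apply Continuous.fun_smul _ continuous_id
      exact continuous_norm.rpow_const
        (fun z => Or.inr (div_nonneg (by linarith) (by norm_num)))
    simp only [hVmap_eq]
    exact hc.comp_stronglyMeasurable hgsm
  have hVgnorm : ∀ x, ‖Vmap p (g x)‖ = ‖g x‖ ^ (p/2) := fun x => by
    rw [hVmap_eq]; exact norm_Vgen_eq hp _
  have hVsq : ∀ z, ‖Vmap p z‖ ^ (2:ℕ) = ‖z‖ ^ p := fun z => by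
    rw [hVmap_eq]; exact norm_Vgen_sq hp _
  have hVgν : Integrable (fun x => Vmap p (g x)) ν := by
    refine Integrable.mono' ((integrable_const 1).add hgpν)
      hVgsm.aestronglyMeasurable ?_
    filter_upwards with x
    rw [hVgnorm x]
    exact r4 (norm_nonneg _) (by positivity) (by linarith)
  have hVnorm_meas : ∀ c, Measurable fun x => ‖Vmap p (g x) - c‖ :=
    fun c => ((hVgsm.sub stronglyMeasurable_const).norm).measurable
  have hVint_2 : ∀ c, Integrable (fun x => ‖Vmap p (g x) - c‖ ^ (2:ℕ)) ν := by
    intro c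
    refine Integrable.mono' ((hgpν.const_mul 2).add (integrable_const (2 * ‖c‖^(2:ℕ))))
      (((hVnorm_meas c).pow_const 2).aestronglyMeasurable) ?_
    filter_upwards with x
    rw [Real.norm_eq_abs, abs_of_nonneg (by positivity)]
    have h1 : ‖Vmap p (g x) - c‖ ≤ ‖Vmap p (g x)‖ + ‖c‖ := norm_sub_le _ _
    have h2 : ‖Vmap p (g x) - c‖^(2:ℕ) ≤ (‖Vmap p (g x)‖ + ‖c‖)^(2:ℕ) :=
      pow_le_pow_left₀ (norm_nonneg _) h1 2
    have h4 := hVsq (g x)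
    calc ‖Vmap p (g x) - c‖^(2:ℕ) ≤ (‖Vmap p (g x)‖ + ‖c‖)^(2:ℕ) := h2
      _ ≤ 2*‖Vmap p (g x)‖^(2:ℕ) + 2*‖c‖^(2:ℕ) := by
          nlinarith [sq_nonneg (‖Vmap p (g x)‖ - ‖c‖)]
      _ = 2*‖g x‖^p + 2*‖c‖^(2:ℕ) := by rw [h4]
  have hVint_1 : ∀ c, Integrable (fun x => ‖Vmap p (g x) - c‖) ν := by
    intro c
    refine Integrable.mono' ((integrable_const 1).add (hVint_2 c))
      ((hVnorm_meas c).aestronglyMeasurable) ?_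
    filter_upwards with x
    rw [Real.norm_eq_abs, abs_of_nonneg (norm_nonneg _)]
    have hb : ‖Vmap p (g x) - c‖ ≤ 1 + ‖Vmap p (g x) - c‖ ^ (2:ℕ) := by
      nlinarith [sq_nonneg (‖Vmap p (g x) - c‖ - 1), sq_nonneg (‖Vmap p (g x) - c‖)]
    exact hb
  -- abbreviations
  set z₀ := ⨍ y in B, g y with hz₀def
  set V₀ := ⨍ y in B, Vmap p (g y) with hV₀def
  have hz₀ν : z₀ = ∫ y, g y ∂ν := by rw [hz₀def]; exact average_eq' _ _
  have hV₀ν : V₀ = ∫ y, Vmap p (g y) ∂ν := by rw [hV₀def]; exact average_eq' _ _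
  set IΦ := ⨍ x in B, (‖z₀‖ ^ (p - 2) * ‖g x - z₀‖ ^ 2 + ‖g x - z₀‖ ^ p) with hIΦdef
  set IV := ⨍ x in B, ‖Vmap p (g x) - V₀‖ ^ 2 with hIVdef
  have hIΦν : IΦ = ∫ x, (‖z₀‖ ^ (p - 2) * ‖g x - z₀‖ ^ (2:ℕ) + ‖g x - z₀‖ ^ p) ∂ν := by
    rw [hIΦdef]; exact average_eq' _ _
  have hIVν : IV = ∫ x, ‖Vmap p (g x) - V₀‖ ^ (2:ℕ) ∂ν := by
    rw [hIVdef]; exact average_eq' _ _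
  have hIΦ0 : 0 ≤ IΦ := by
    rw [hIΦν]; exact integral_nonneg fun x => by positivity
  have hIV0 : 0 ≤ IV := by
    rw [hIVν]; exact integral_nonneg fun x => by positivity
  have hΦint : Integrable
      (fun x => ‖z₀‖ ^ (p - 2) * ‖g x - z₀‖ ^ (2:ℕ) + ‖g x - z₀‖ ^ p) ν :=
    ((hint_2 z₀).const_mul _).add (hint_p z₀)
  -- UPPER BOUND : IV ≤ KU * IΦ
  have hIW : ∫ x, ‖Vmap p (g x) - Vmap p z₀‖ ^ (2:ℕ) ∂ν ≤ cu * IΦ := by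
    rw [hIΦν]
    calc ∫ x, ‖Vmap p (g x) - Vmap p z₀‖ ^ (2:ℕ) ∂ν
        ≤ ∫ x, cu * (‖z₀‖ ^ (p - 2) * ‖g x - z₀‖ ^ (2:ℕ) + ‖g x - z₀‖ ^ p) ∂ν :=
          integral_mono (hVint_2 _) (hΦint.const_mul cu) (fun x => (hlu (g x) z₀).2)
      _ = cu * ∫ x, (‖z₀‖ ^ (p - 2) * ‖g x - z₀‖ ^ (2:ℕ) + ‖g x - z₀‖ ^ p) ∂ν :=
          integral_const_mul _ _
  have hVdiff : ‖Vmap p z₀ - V₀‖ ^ (2:ℕ)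
      ≤ ∫ x, ‖Vmap p (g x) - Vmap p z₀‖ ^ (2:ℕ) ∂ν := by
    have h1 : Vmap p z₀ - V₀ = ∫ x, (Vmap p z₀ - Vmap p (g x)) ∂ν := by
      rw [integral_sub (integrable_const _) hVgν, integral_const, hνuniv, one_smul, ← hV₀ν]
    have h2 : ‖Vmap p z₀ - V₀‖ ≤ ∫ x, ‖Vmap p (g x) - Vmap p z₀‖ ∂ν := by
      rw [h1]
      refine (norm_integral_le_integral_norm _).trans (le_of_eq ?_)
      exact integral_congr_ae (Filter.Eventually.of_forall fun x => norm_sub_rev _ _)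
    calc ‖Vmap p z₀ - V₀‖ ^ (2:ℕ)
        ≤ (∫ x, ‖Vmap p (g x) - Vmap p z₀‖ ∂ν) ^ (2:ℕ) :=
          pow_le_pow_left₀ (norm_nonneg _) h2 2
      _ ≤ ∫ x, ‖Vmap p (g x) - Vmap p z₀‖ ^ (2:ℕ) ∂ν :=
          hJ2gen _ (hVint_1 _) (hVint_2 _)
  have hUpper : IV ≤ KU * IΦ := by
    rw [hIVν]
    have hpt : ∀ x, ‖Vmap p (g x) - V₀‖ ^ (2:ℕ)
        ≤ 2 * ‖Vmap p (g x) - Vmap p z₀‖ ^ (2:ℕ) + 2 * ‖Vmap p z₀ - V₀‖ ^ (2:ℕ) := by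
      intro x
      have hT : ‖Vmap p (g x) - V₀‖ ≤ ‖Vmap p (g x) - Vmap p z₀‖ + ‖Vmap p z₀ - V₀‖ := by
        calc ‖Vmap p (g x) - V₀‖ = ‖(Vmap p (g x) - Vmap p z₀) + (Vmap p z₀ - V₀)‖ := by
              rw [sub_add_sub_cancel]
          _ ≤ _ := norm_add_le _ _
      nlinarith [pow_le_pow_left₀ (norm_nonneg (Vmap p (g x) - V₀)) hT 2,
        sq_nonneg (‖Vmap p (g x) - Vmap p z₀‖ - ‖Vmap p z₀ - V₀‖),
        norm_nonneg (Vmap p (g x) - Vmap p z₀), norm_nonneg (Vmap p z₀ - V₀)]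
    calc ∫ x, ‖Vmap p (g x) - V₀‖ ^ (2:ℕ) ∂ν
        ≤ ∫ x, (2 * ‖Vmap p (g x) - Vmap p z₀‖ ^ (2:ℕ)
            + 2 * ‖Vmap p z₀ - V₀‖ ^ (2:ℕ)) ∂ν :=
          integral_mono (hVint_2 _) (((hVint_2 _).const_mul 2).add (integrable_const _)) hpt
      _ = 2 * (∫ x, ‖Vmap p (g x) - Vmap p z₀‖ ^ (2:ℕ) ∂ν)
            + 2 * ‖Vmap p z₀ - V₀‖ ^ (2:ℕ) := by
          rw [integral_add ((hVint_2 _).const_mul 2) (integrable_const _),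
            integral_const_mul, integral_const, hνuniv, smul_eq_mul, one_mul]
      _ ≤ 2 * (cu * IΦ) + 2 * (cu * IΦ) := by
          have h5 := hVdiff.trans hIW
          linarith [hIW]
      _ = KU * IΦ := by rw [hKU]; ring
  -- LOWER BOUND
  set z₁ := Vgen ((2-p)/p) V₀ with hz₁def
  have hz₁V : Vmap p z₁ = V₀ := by
    rw [hVmap_eq, hz₁def]
    refine vgen_comp ?_ V₀
    field_simp
    ring
  have hψint : Integrable
      (fun x => ‖z₁‖ ^ (p-2) * ‖g x - z₁‖ ^ (2:ℕ) + ‖g x - z₁‖ ^ p) ν :=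
    ((hint_2 z₁).const_mul _).add (hint_p z₁)
  have hstep1 : ∀ x, ‖z₀‖ ^ (p - 2) * ‖g x - z₀‖ ^ (2:ℕ) + ‖g x - z₀‖ ^ p
      ≤ K₃ * ((‖z₁‖ ^ (p-2) * ‖g x - z₁‖ ^ (2:ℕ) + ‖g x - z₁‖ ^ p)
          + (‖z₁‖ ^ (p-2) * ‖z₁ - z₀‖ ^ (2:ℕ) + ‖z₁ - z₀‖ ^ p)) := by
    intro x
    rw [hK₃]
    refine shift_lemma hp (norm_nonneg _) (norm_nonneg _) (norm_nonneg _)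
      (norm_nonneg _) (norm_nonneg _) ?_ ?_
    · calc ‖z₀‖ = ‖z₁ - (z₁ - z₀)‖ := by congr 1; abel
        _ ≤ ‖z₁‖ + ‖z₁ - z₀‖ := norm_sub_le _ _
    · calc ‖g x - z₀‖ = ‖(g x - z₁) + (z₁ - z₀)‖ := by congr 1; abel
        _ ≤ _ := norm_add_le _ _
  have hm : ‖z₁ - z₀‖ ≤ ∫ x, ‖g x - z₁‖ ∂ν := by
    have h1 : z₁ - z₀ = ∫ x, (z₁ - g x) ∂ν := by
      rw [integral_sub (integrable_const _) hgν, integral_const, hνuniv, one_smul, ← hz₀ν]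
    rw [h1]
    refine (norm_integral_le_integral_norm _).trans (le_of_eq ?_)
    exact integral_congr_ae (Filter.Eventually.of_forall fun x => norm_sub_rev _ _)
  have hψv : ‖z₁‖ ^ (p-2) * ‖z₁ - z₀‖ ^ (2:ℕ) + ‖z₁ - z₀‖ ^ p
      ≤ ∫ x, (‖z₁‖ ^ (p-2) * ‖g x - z₁‖ ^ (2:ℕ) + ‖g x - z₁‖ ^ p) ∂ν := by
    have hJ2 := hJ2gen _ (hint_1 z₁) (hint_2 z₁)
    have hJp : (∫ x, ‖g x - z₁‖ ∂ν) ^ p ≤ ∫ x, ‖g x - z₁‖ ^ p ∂ν := by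
      have hJ := (convexOn_rpow (by linarith : (1:ℝ) ≤ p)).map_average_le
        ((Real.continuous_rpow_const hp0.le).continuousOn) isClosed_Ici
        (Filter.Eventually.of_forall fun x => Set.mem_Ici.mpr (norm_nonneg _))
        (hint_1 z₁) (hint_p z₁)
      rwa [average_eq_integral, average_eq_integral] at hJ
    have h2 : ‖z₁ - z₀‖ ^ (2:ℕ) ≤ ∫ x, ‖g x - z₁‖ ^ (2:ℕ) ∂ν :=
      (pow_le_pow_left₀ (norm_nonneg _) hm 2).trans hJ2
    have hpp : ‖z₁ - z₀‖ ^ p ≤ ∫ x, ‖g x - z₁‖ ^ p ∂ν :=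
      (rpow_le_rpow (norm_nonneg _) hm hp0.le).trans hJp
    have hlin : ∫ x, (‖z₁‖ ^ (p-2) * ‖g x - z₁‖ ^ (2:ℕ) + ‖g x - z₁‖ ^ p) ∂ν
        = ‖z₁‖ ^ (p-2) * (∫ x, ‖g x - z₁‖ ^ (2:ℕ) ∂ν) + ∫ x, ‖g x - z₁‖ ^ p ∂ν := by
      rw [integral_add ((hint_2 z₁).const_mul _) (hint_p z₁), integral_const_mul]
    rw [hlin]
    have hz₁p : (0:ℝ) ≤ ‖z₁‖ ^ (p-2) := rpow_nonneg (norm_nonneg _) _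
    have := mul_le_mul_of_nonneg_left h2 hz₁p
    linarith
  have hψpt : ∀ x, ‖z₁‖ ^ (p-2) * ‖g x - z₁‖ ^ (2:ℕ) + ‖g x - z₁‖ ^ p
      ≤ cl⁻¹ * ‖Vmap p (g x) - V₀‖ ^ (2:ℕ) := by
    intro x
    have h1 := (hlu (g x) z₁).1
    rw [← hz₁V]
    calc ‖z₁‖ ^ (p-2) * ‖g x - z₁‖ ^ (2:ℕ) + ‖g x - z₁‖ ^ p
        = cl⁻¹ * (cl * (‖z₁‖ ^ (p-2) * ‖g x - z₁‖ ^ (2:ℕ) + ‖g x - z₁‖ ^ p)) := by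
          rw [← mul_assoc, inv_mul_cancel₀ hcl.ne', one_mul]
      _ ≤ cl⁻¹ * ‖Vmap p (g x) - Vmap p z₁‖ ^ (2:ℕ) :=
          mul_le_mul_of_nonneg_left h1 (by positivity)
  have hLower : KL * IΦ ≤ IV := by
    have hmain : IΦ ≤ 2 * K₃ * cl⁻¹ * IV := by
      rw [hIΦν, hIVν]
      calc ∫ x, (‖z₀‖ ^ (p - 2) * ‖g x - z₀‖ ^ (2:ℕ) + ‖g x - z₀‖ ^ p) ∂ν
          ≤ ∫ x, K₃ * ((‖z₁‖ ^ (p-2) * ‖g x - z₁‖ ^ (2:ℕ) + ‖g x - z₁‖ ^ p)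
              + (‖z₁‖ ^ (p-2) * ‖z₁ - z₀‖ ^ (2:ℕ) + ‖z₁ - z₀‖ ^ p)) ∂ν :=
            integral_mono hΦint ((hψint.add (integrable_const _)).const_mul K₃) hstep1
        _ = K₃ * ((∫ x, (‖z₁‖ ^ (p-2) * ‖g x - z₁‖ ^ (2:ℕ) + ‖g x - z₁‖ ^ p) ∂ν)
              + (‖z₁‖ ^ (p-2) * ‖z₁ - z₀‖ ^ (2:ℕ) + ‖z₁ - z₀‖ ^ p)) := by
            rw [integral_const_mul, integral_add hψint (integrable_const _),
              integral_const, hνuniv, smul_eq_mul, one_mul]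
        _ ≤ K₃ * ((∫ x, (‖z₁‖ ^ (p-2) * ‖g x - z₁‖ ^ (2:ℕ) + ‖g x - z₁‖ ^ p) ∂ν)
              + (∫ x, (‖z₁‖ ^ (p-2) * ‖g x - z₁‖ ^ (2:ℕ) + ‖g x - z₁‖ ^ p) ∂ν)) :=
            mul_le_mul_of_nonneg_left (by linarith [hψv]) hK₃pos.le
        _ = 2 * K₃ *
            (∫ x, (‖z₁‖ ^ (p-2) * ‖g x - z₁‖ ^ (2:ℕ) + ‖g x - z₁‖ ^ p) ∂ν) := by ring
        _ ≤ 2 * K₃ * (cl⁻¹ * ∫ x, ‖Vmap p (g x) - V₀‖ ^ (2:ℕ) ∂ν) := by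
            refine mul_le_mul_of_nonneg_left ?_ (by positivity)
            calc ∫ x, (‖z₁‖ ^ (p-2) * ‖g x - z₁‖ ^ (2:ℕ) + ‖g x - z₁‖ ^ p) ∂ν
                ≤ ∫ x, cl⁻¹ * ‖Vmap p (g x) - V₀‖ ^ (2:ℕ) ∂ν :=
                  integral_mono hψint ((hVint_2 V₀).const_mul _) hψpt
              _ = cl⁻¹ * ∫ x, ‖Vmap p (g x) - V₀‖ ^ (2:ℕ) ∂ν := integral_const_mul _ _
        _ = 2 * K₃ * cl⁻¹ * ∫ x, ‖Vmap p (g x) - V₀‖ ^ (2:ℕ) ∂ν := by ring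
    rw [hKL, inv_mul_le_iff₀ (by positivity : (0:ℝ) < 2 * K₃ * cl⁻¹)]
    exact hmain
  -- FINAL
  have hcollapse : (IΦ ^ (1/p)) ^ (p/2) = IΦ ^ (1/(2:ℝ)) := by
    rw [← Real.rpow_mul hIΦ0]
    congr 1
    field_simp
  constructor
  · rw [hcollapse]
    calc KL ^ (1/(2:ℝ)) * IΦ ^ (1/(2:ℝ)) = (KL * IΦ) ^ (1/(2:ℝ)) :=
        (Real.mul_rpow hKLpos.le hIΦ0).symm
      _ ≤ IV ^ (1/(2:ℝ)) := Real.rpow_le_rpow (by positivity) hLower (by norm_num)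
  · rw [hcollapse]
    calc IV ^ (1/(2:ℝ)) ≤ (KU * IΦ) ^ (1/(2:ℝ)) :=
        Real.rpow_le_rpow hIV0 hUpper (by norm_num)
      _ = KU ^ (1/(2:ℝ)) * IΦ ^ (1/(2:ℝ)) := Real.mul_rpow hKUpos.le hIΦ0
end Vector
end
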